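/- arXiv:2104.12508 — 7 statements merged into one kernel-verified Lean document; each statement's English description precedes it below -/
import Mathlib

section
/- Every recognizable relation R ⊆ Σ* × Γ* with nonempty components has a uniformization by a recognizable relation; more precisely, if R = ⋃_{i=1}^n U_i × V_i with the U_i pairwise disjoint and each V_i nonempty, and v_i ∈ V_i is chosen for each i, then R_f = ⋃_{i=1}^n U_i × {v_i} is a uniformization of R, i.e., R_f ⊆ R, dom(R_f) = dom(R), and R_f is functional. -/
open List

/-- A language is regular. -/
def IsReg {α : Type} (L : Set (List α)) : Prop := Language.IsRegular L

/-- Erase output letters: keep the Σ-part of a synchronization word. -/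
def piIn {σ γ : Type} (w : List (σ ⊕ γ)) : List σ := w.filterMap Sum.getLeft?
/-- Erase input letters: keep the Γ-part of a synchronization word. -/
def piOut {σ γ : Type} (w : List (σ ⊕ γ)) : List γ := w.filterMap Sum.getRight?
/-- `⟦w⟧`, the pair synchronized by `w`. -/
def syncPair {σ γ : Type} (w : List (σ ⊕ γ)) : List σ × List γ := (piIn w, piOut w)
/-- `⟦L⟧`, the relation defined by a synchronization language. -/
def syncRel {σ γ : Type} (L : Set (List (σ ⊕ γ))) : Set (List σ × List γ) := syncPair '' L

def rdom {σ γ : Type} (R : Set (List σ × List γ)) : Set (List σ) := {u | ∃ v, (u, v) ∈ R}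

/-- A recognizable relation: a finite union of products of regular languages. -/
def Recognizable {σ γ : Type} (R : Set (List σ × List γ)) : Prop :=
  ∃ (n : ℕ) (U : Fin n → Set (List σ)) (V : Fin n → Set (List γ)),
    (∀ i, IsReg (U i) ∧ IsReg (V i)) ∧
    R = ⋃ i, {p : List σ × List γ | p.1 ∈ U i ∧ p.2 ∈ V i}

/-- lag of the (1-based) position `i` of `w`. -/
def lagAt {σ γ : Type} (w : List (σ ⊕ γ)) (i : ℕ) : ℕ :=
  ((((w.take i).countP Sum.isLeft : ℕ) : ℤ) - (((w.take i).countP Sum.isRight : ℕ) : ℤ)).natAbs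

/-- maximal lag of a position of `w`. -/
def lagW {σ γ : Type} (w : List (σ ⊕ γ)) : ℕ := (Finset.range (w.length + 1)).sup (lagAt w)

/-- number of shifts of `w`. -/
def shiftCount {σ γ : Type} (w : List (σ ⊕ γ)) : ℕ :=
  (w.zip w.tail).countP fun p => p.1.isLeft != p.2.isLeft

/-- the (0-based) list of shift positions of `w`, in increasing order. -/
def shiftList {σ γ : Type} (w : List (σ ⊕ γ)) : List ℕ :=
  (List.range w.length).filter fun j =>
    decide (j + 1 < w.length) &&
      decide ((w[j]?).map Sum.isLeft ≠ (w[j + 1]?).map Sum.isLeft)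

/-- shiftlag of `w`: the largest `n` such that `w` has `n` consecutive shifts that are all
`≥n`-lagged. -/
noncomputable def shiftlagW {σ γ : Type} (w : List (σ ⊕ γ)) : ℕ :=
  sSup {n : ℕ | ∃ l : List ℕ, l <:+: shiftList w ∧ l.length = n ∧ ∀ j ∈ l, n ≤ lagAt w (j + 1)}

def FiniteShift {σ γ : Type} (L : Set (List (σ ⊕ γ))) : Prop := ∃ k, ∀ w ∈ L, shiftCount w ≤ k
def FiniteLag {σ γ : Type} (L : Set (List (σ ⊕ γ))) : Prop := ∃ k, ∀ w ∈ L, lagW w ≤ k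
def FiniteShiftlag {σ γ : Type} (L : Set (List (σ ⊕ γ))) : Prop := ∃ k, ∀ w ∈ L, shiftlagW w ≤ k

/-- left quotient `u⁻¹L`. -/
def leftQuot {α : Type} (u : List α) (L : Set (List α)) : Set (List α) := {z | u ++ z ∈ L}

/-- `w ⪯_T w'` : `w` is at most as synchronous as `w'` inside `T`. -/
def syncLe {σ γ : Type} (T : Set (List (σ ⊕ γ))) (w w' : List (σ ⊕ γ)) : Prop :=
  ∀ i : ℕ, FiniteShift (leftQuot (w'.take i) T) → FiniteShift (leftQuot (w.take i) T)

def allsync {σ γ : Type} (S T : Set (List (σ ⊕ γ))) : Set (List (σ ⊕ γ)) :=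
  {w | w ∈ T ∧ syncPair w ∈ syncRel S}

def maxsync {σ γ : Type} (S T : Set (List (σ ⊕ γ))) : Set (List (σ ⊕ γ)) :=
  {w | w ∈ T ∧ syncPair w ∈ syncRel S ∧
    ∀ w' ∈ T, syncPair w' = syncPair w → syncLe T w' w}

def minsync {σ γ : Type} (S T : Set (List (σ ⊕ γ))) : Set (List (σ ⊕ γ)) :=
  {w | w ∈ T ∧ syncPair w ∈ syncRel S ∧
    ∀ w' ∈ T, syncPair w' = syncPair w → syncLe T w w'}

/-- `Rel(T)`: relations definable by regular subsets of `T`. -/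
def RelOf {σ γ : Type} (T : Set (List (σ ⊕ γ))) : Set (Set (List σ × List γ)) :=
  {R | ∃ T' : Set (List (σ ⊕ γ)), T' ⊆ T ∧ IsReg T' ∧ syncRel T' = R}

/-- the canonical synchronization language `(ΣΓ)*(Σ* + Γ*)` of automatic relations. -/
def CanonAut (σ γ : Type) : Set (List (σ ⊕ γ)) :=
  {w | ∃ (p : List (σ × γ)) (x : List σ) (y : List γ),
    (x = [] ∨ y = []) ∧
    w = (p.flatMap fun ab => [Sum.inl ab.1, Sum.inr ab.2]) ++ x.map Sum.inl ++ y.map Sum.inr}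

/-- the canonical synchronization language `Σ*Γ*` of recognizable relations. -/
def InOut (σ γ : Type) : Set (List (σ ⊕ γ)) :=
  {w | ∃ (x : List σ) (y : List γ), w = x.map Sum.inl ++ y.map Sum.inr}

/-- An automatic relation: definable by a regular subset of `(ΣΓ)*(Σ* + Γ*)`. -/
def Automatic {σ γ : Type} (R : Set (List σ × List γ)) : Prop :=
  ∃ L : Set (List (σ ⊕ γ)), L ⊆ CanonAut σ γ ∧ IsReg L ∧ syncRel L = R

/-- `x` and `y` are compatible: equal length and extendable to a common pair. -/
def Compatible {σ γ : Type} (x y : List (σ ⊕ γ)) : Prop :=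
  x.length = y.length ∧ ∃ u v : List (σ ⊕ γ), syncPair (x ++ u) = syncPair (y ++ v)

/-- `diff(x,y) = (u,v)`: `u,v` are the shortest words with `⟦xu⟧ = ⟦yv⟧`. -/
def IsDiff {σ γ : Type} (x y u v : List (σ ⊕ γ)) : Prop :=
  syncPair (x ++ u) = syncPair (y ++ v) ∧
    ∀ u' v' : List (σ ⊕ γ), syncPair (x ++ u') = syncPair (y ++ v') →
      u.length ≤ u'.length ∧ v.length ≤ v'.length

noncomputable section SingletonReg
variable {α : Type} (v : List α)

open scoped Classical in
private noncomputable def singDFA (v : List α) : DFA α (Option {l : List α // l <:+ v}) where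
  step := fun s a => s.bind fun l =>
    match l with
    | ⟨[], _⟩ => none
    | ⟨b :: t, h⟩ => if b = a then some ⟨t, (List.suffix_cons b t).trans h⟩ else none
  start := some ⟨v, List.suffix_refl v⟩
  accept := {some ⟨[], (List.nil_suffix : [] <:+ v)⟩}

private lemma singDFA_none (x : List α) : (singDFA v).evalFrom none x = none := by
  induction x with
  | nil => rfl
  | cons a x ih => simpa [DFA.evalFrom, singDFA] using ih

private lemma singDFA_eval (x : List α) : ∀ (l : List α) (h : l <:+ v),
    ((singDFA v).evalFrom (some ⟨l, h⟩) x = some ⟨[], (List.nil_suffix : [] <:+ v)⟩ ↔ x = l) := by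
  induction x with
  | nil =>
    intro l h
    constructor
    · intro he
      simpa [DFA.evalFrom] using congrArg (fun s => (s.map Subtype.val).getD []) he |>.symm
    · rintro rfl; rfl
  | cons a x ih =>
    intro l h
    cases l with
    | nil =>
      simp only [DFA.evalFrom, List.foldl_cons]
      have hstep : (singDFA v).step (some ⟨[], h⟩) a = none := rfl
      rw [hstep]
      have h2 : List.foldl (singDFA v).step none x = none := singDFA_none v x
      rw [h2]
      simp
    | cons b t =>
      simp only [DFA.evalFrom, List.foldl_cons]
      by_cases hab : b = a
      · have hstep : (singDFA v).step (some ⟨b :: t, h⟩) a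
            = some ⟨t, (List.suffix_cons b t).trans h⟩ := by
          simp [singDFA, hab]
        rw [hstep]
        have h2 : List.foldl (singDFA v).step (some ⟨t, (List.suffix_cons b t).trans h⟩) x = some ⟨[], (List.nil_suffix : [] <:+ v)⟩ ↔ x = t := ih t ((List.suffix_cons b t).trans h)
        rw [h2]
        subst hab
        constructor
        · rintro rfl; rfl
        · intro he; exact (List.cons_eq_cons.mp he).2
      · have hstep : (singDFA v).step (some ⟨b :: t, h⟩) a = none := by
          simp [singDFA, hab]
        rw [hstep]
        have h2 : List.foldl (singDFA v).step none x = none := singDFA_none v x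
        rw [h2]
        constructor
        · intro he; exact absurd he (by simp)
        · intro he; exact absurd (List.cons_eq_cons.mp he).1.symm hab

private lemma isReg_singleton (v : List α) : Language.IsRegular {v} := by
  classical
  haveI : Fintype {l : List α // l <:+ v} := by
    apply Fintype.ofSurjective (fun i : Fin (v.length + 1) => (⟨v.drop i, List.drop_suffix i v⟩ : {l : List α // l <:+ v}))
    rintro ⟨l, t, rfl⟩
    refine ⟨⟨t.length, ?_⟩, ?_⟩
    · simp [Nat.lt_succ_iff]
    · simp [List.drop_left]
  refine ⟨Option {l : List α // l <:+ v}, inferInstance, singDFA v, ?_⟩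
  ext x
  have := singDFA_eval v x v (List.suffix_refl v)
  simp only [DFA.mem_accepts, DFA.eval, singDFA] at *
  constructor
  · intro hx
    exact (this.mp (by simpa [singDFA] using hx))
  · rintro rfl
    exact Set.mem_singleton_iff.mpr (this.mpr rfl)
end SingletonReg

/-- if `R = ⋃ U_i × V_i` with the `U_i` pairwise disjoint regular and the `V_i`
nonempty regular, and `v_i ∈ V_i` are chosen, then `R_f = ⋃ U_i × {v_i}` is a uniformization
of `R` by a recognizable relation. -/
theorem stmt2 {σ γ : Type} (n : ℕ) (U : Fin n → Set (List σ)) (V : Fin n → Set (List γ))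
    (hreg : ∀ i, IsReg (U i) ∧ IsReg (V i))
    (hdisj : ∀ i j, i ≠ j → Disjoint (U i) (U j))
    (hne : ∀ i, (V i).Nonempty)
    (v : Fin n → List γ) (hv : ∀ i, v i ∈ V i)
    (R : Set (List σ × List γ))
    (hR : R = ⋃ i, {p : List σ × List γ | p.1 ∈ U i ∧ p.2 ∈ V i}) :
    let Rf : Set (List σ × List γ) := ⋃ i, {p : List σ × List γ | p.1 ∈ U i ∧ p.2 = v i}
    Rf ⊆ R ∧ rdom Rf = rdom R ∧ Recognizable Rf ∧
      (∀ u v₁ v₂, (u, v₁) ∈ Rf → (u, v₂) ∈ Rf → v₁ = v₂) := by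
    intro Rf
    have hRf : Rf = ⋃ i, {p : List σ × List γ | p.1 ∈ U i ∧ p.2 = v i} := rfl
    have hRfR : Rf ⊆ R := by
      intro p hp
      rw [hRf] at hp
      simp only [Set.mem_iUnion, Set.mem_setOf_eq] at hp
      obtain ⟨i, h1, h2⟩ := hp
      rw [hR]
      exact Set.mem_iUnion.mpr ⟨i, h1, h2 ▸ hv i⟩
    refine ⟨hRfR, ?_, ?_, ?_⟩
    · ext u
      constructor
      · rintro ⟨w, hw⟩; exact ⟨w, hRfR hw⟩
      · rintro ⟨w, hw⟩
        rw [hR] at hw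
        simp only [Set.mem_iUnion, Set.mem_setOf_eq] at hw
        obtain ⟨i, h1, _⟩ := hw
        refine ⟨v i, ?_⟩
        rw [hRf]
        exact Set.mem_iUnion.mpr ⟨i, h1, rfl⟩
    · refine ⟨n, U, fun i => {v i}, fun i => ⟨(hreg i).1, isReg_singleton (v i)⟩, ?_⟩
      rw [hRf]
      simp only [Set.mem_singleton_iff]
    · intro u v₁ v₂ h1 h2
      rw [hRf] at h1 h2
      simp only [Set.mem_iUnion, Set.mem_setOf_eq] at h1 h2
      obtain ⟨i, hi, rfl⟩ := h1
      obtain ⟨j, hj, rfl⟩ := h2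
      rcases eq_or_ne i j with rfl | hne
      · rfl
      · exact (Set.disjoint_left.mp (hdisj i j hne) hi hj).elim
end

section
/- Let S ⊆ (Σ∪Γ)* be regular with finite shift and T ⊆ (Σ∪Γ)* be regular such that every pair in ⟦S⟧ has a synchronization in T (i.e. ⟦S⟧ ⊆ ⟦T⟧). Then there exists a regular language U ⊆ T with ⟦U⟧ = ⟦S⟧, namely U = {w ∈ T | ⟦w⟧ ∈ ⟦S⟧}. -/
open List

namespace StmtAux

variable {α σ γ : Type}

/-! ### piIn / piOut basics -/

@[simp] lemma piIn_nil : piIn ([] : List (σ ⊕ γ)) = [] := rfl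
@[simp] lemma piOut_nil : piOut ([] : List (σ ⊕ γ)) = [] := rfl
@[simp] lemma piIn_cons_inl (a : σ) (w : List (σ ⊕ γ)) :
    piIn (Sum.inl a :: w) = a :: piIn w := by simp [piIn]
@[simp] lemma piIn_cons_inr (b : γ) (w : List (σ ⊕ γ)) :
    piIn (Sum.inr b :: w) = piIn w := by rfl
@[simp] lemma piOut_cons_inl (a : σ) (w : List (σ ⊕ γ)) :
    piOut (Sum.inl a :: w) = piOut w := by rfl
@[simp] lemma piOut_cons_inr (b : γ) (w : List (σ ⊕ γ)) :
    piOut (Sum.inr b :: w) = b :: piOut w := by simp [piOut]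
@[simp] lemma piIn_append (u v : List (σ ⊕ γ)) : piIn (u ++ v) = piIn u ++ piIn v := by
  simp [piIn]
@[simp] lemma piOut_append (u v : List (σ ⊕ γ)) : piOut (u ++ v) = piOut u ++ piOut v := by
  simp [piOut]
@[simp] lemma piIn_map_inl (x : List σ) : piIn (x.map (Sum.inl : σ → σ ⊕ γ)) = x := by
  induction x with | nil => rfl | cons a x ih => simp [ih]
@[simp] lemma piIn_map_inr (y : List γ) : piIn (y.map (Sum.inr : γ → σ ⊕ γ)) = [] := by
  induction y with | nil => rfl | cons a y ih => simp [ih]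
@[simp] lemma piOut_map_inl (x : List σ) : piOut (x.map (Sum.inl : σ → σ ⊕ γ)) = [] := by
  induction x with | nil => rfl | cons a x ih => simp [ih]
@[simp] lemma piOut_map_inr (y : List γ) : piOut (y.map (Sum.inr : γ → σ ⊕ γ)) = y := by
  induction y with | nil => rfl | cons a y ih => simp [ih]

lemma eq_map_inl_of_allLeft {w : List (σ ⊕ γ)} (h : ∀ l ∈ w, l.isLeft) :
    w = (piIn w).map Sum.inl := by
  induction w with
  | nil => rfl
  | cons a w ih =>
    cases a with
    | inl a => simpa using ih fun l hl => h l (by simp [hl])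
    | inr b => simpa using h (Sum.inr b) (by simp)

lemma eq_map_inr_of_allRight {w : List (σ ⊕ γ)} (h : ∀ l ∈ w, l.isRight) :
    w = (piOut w).map Sum.inr := by
  induction w with
  | nil => rfl
  | cons a w ih =>
    cases a with
    | inr b => simpa using ih fun l hl => h l (by simp [hl])
    | inl a => simpa using h (Sum.inl a) (by simp)

/-! ### Regularity closure -/

lemma isReg_empty : IsReg (∅ : Set (List α)) :=
  ⟨Unit, inferInstance, ⟨fun q _ => q, (), ∅⟩, by
    ext x; exact iff_of_false (fun h => h) (fun h => h)⟩

private def prodD {Q₁ Q₂ : Type} (M₁ : DFA α Q₁) (M₂ : DFA α Q₂) (acc : Set (Q₁ × Q₂)) :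
    DFA α (Q₁ × Q₂) :=
  ⟨fun p a => (M₁.step p.1 a, M₂.step p.2 a), (M₁.start, M₂.start), acc⟩

private lemma prodD_evalFrom {Q₁ Q₂ : Type} (M₁ : DFA α Q₁) (M₂ : DFA α Q₂)
    (acc : Set (Q₁ × Q₂)) : ∀ (x : List α) (p : Q₁ × Q₂),
    (prodD M₁ M₂ acc).evalFrom p x = (M₁.evalFrom p.1 x, M₂.evalFrom p.2 x)
  | [], p => rfl
  | a :: x, p => prodD_evalFrom M₁ M₂ acc x (M₁.step p.1 a, M₂.step p.2 a)

private lemma mem_prodD_accepts {Q₁ Q₂ : Type} (M₁ : DFA α Q₁) (M₂ : DFA α Q₂)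
    (acc : Set (Q₁ × Q₂)) (x : List α) :
    x ∈ (prodD M₁ M₂ acc).accepts ↔ (M₁.eval x, M₂.eval x) ∈ acc := by
  rw [DFA.mem_accepts]
  rw [show (prodD M₁ M₂ acc).eval x = (M₁.eval x, M₂.eval x) from prodD_evalFrom _ _ _ x _]
  exact Iff.rfl

lemma isReg_inter {L₁ L₂ : Set (List α)} (h₁ : IsReg L₁) (h₂ : IsReg L₂) :
    IsReg (L₁ ∩ L₂) := by
  obtain ⟨Q₁, i₁, M₁, rfl⟩ := h₁
  obtain ⟨Q₂, i₂, M₂, rfl⟩ := h₂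
  refine ⟨Q₁ × Q₂, inferInstance, prodD M₁ M₂ {p | p.1 ∈ M₁.accept ∧ p.2 ∈ M₂.accept}, ?_⟩
  ext x
  rw [mem_prodD_accepts]
  exact Iff.rfl

lemma isReg_union {L₁ L₂ : Set (List α)} (h₁ : IsReg L₁) (h₂ : IsReg L₂) :
    IsReg (L₁ ∪ L₂) := by
  obtain ⟨Q₁, i₁, M₁, rfl⟩ := h₁
  obtain ⟨Q₂, i₂, M₂, rfl⟩ := h₂
  refine ⟨Q₁ × Q₂, inferInstance, prodD M₁ M₂ {p | p.1 ∈ M₁.accept ∨ p.2 ∈ M₂.accept}, ?_⟩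
  ext x
  rw [mem_prodD_accepts]
  exact Iff.rfl

lemma isReg_iUnion {ι : Type} [Fintype ι] (L : ι → Set (List α)) (h : ∀ i, IsReg (L i)) :
    IsReg (⋃ i, L i) := by
  classical
  have key : ∀ s : Finset ι, IsReg (⋃ i ∈ s, L i) := by
    intro s
    induction s using Finset.induction with
    | empty => simpa using isReg_empty
    | insert _ _ hx ih =>
      rw [Finset.set_biUnion_insert]
      exact isReg_union (h _) ih
  have := key Finset.univ
  simpa using this

lemma isReg_singleton_nil : IsReg ({[]} : Set (List α)) := by
  refine ⟨Bool, inferInstance, ⟨fun _ _ => false, true, {true}⟩, ?_⟩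
  have aux : ∀ x : List α, List.foldl (fun (_ : Bool) (_ : α) => false) false x = false := by
    intro x; induction x with | nil => rfl | cons a x ih => exact ih
  ext x
  cases x with
  | nil =>
    simp only [DFA.mem_accepts]
    exact iff_of_true rfl rfl
  | cons a x =>
    simp only [DFA.mem_accepts]
    refine iff_of_false ?_ (fun h => List.cons_ne_nil a x h)
    intro h
    have : List.foldl (fun (_ : Bool) (_ : α) => false) false x = true := h
    rw [aux x] at this
    exact Bool.false_ne_true this

/-- languages of the form `{x | M.evalFrom p x = q}` are regular -/
lemma isReg_pairLang {Q : Type} [Fintype Q] (M : DFA α Q) (p q : Q) :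
    IsReg {x : List α | M.evalFrom p x = q} :=
  ⟨Q, inferInstance, ⟨M.step, p, {q}⟩, by
    ext x; rw [DFA.mem_accepts]; exact Iff.rfl⟩


/-! ### preimages under piIn / piOut -/

private def inD {Q : Type} (M : DFA σ Q) : DFA (σ ⊕ γ) Q :=
  ⟨fun q l => Sum.elim (M.step q) (fun _ => q) l, M.start, M.accept⟩

private lemma inD_evalFrom {Q : Type} (M : DFA σ Q) :
    ∀ (w : List (σ ⊕ γ)) (q : Q), (inD M).evalFrom q w = M.evalFrom q (piIn w)
  | [], q => rfl
  | (Sum.inl a) :: w, q => by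
    rw [piIn_cons_inl]
    exact inD_evalFrom M w (M.step q a)
  | (Sum.inr b) :: w, q => by
    rw [piIn_cons_inr]
    exact inD_evalFrom M w q

private def outD {Q : Type} (M : DFA γ Q) : DFA (σ ⊕ γ) Q :=
  ⟨fun q l => Sum.elim (fun _ => q) (M.step q) l, M.start, M.accept⟩

private lemma outD_evalFrom {Q : Type} (M : DFA γ Q) :
    ∀ (w : List (σ ⊕ γ)) (q : Q), (outD M).evalFrom q w = M.evalFrom q (piOut w)
  | [], q => rfl
  | (Sum.inl a) :: w, q => by
    rw [piOut_cons_inl]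
    exact outD_evalFrom M w q
  | (Sum.inr b) :: w, q => by
    rw [piOut_cons_inr]
    exact outD_evalFrom M w (M.step q b)

lemma isReg_piIn_preimage {L : Set (List σ)} (h : IsReg L) :
    IsReg {w : List (σ ⊕ γ) | piIn w ∈ L} := by
  obtain ⟨Q, iQ, M, rfl⟩ := h
  refine ⟨Q, inferInstance, inD M, ?_⟩
  ext w
  rw [DFA.mem_accepts, show (inD (γ := γ) M).eval w = M.evalFrom M.start (piIn w) from
    inD_evalFrom M w M.start]
  exact Iff.rfl

lemma isReg_piOut_preimage {L : Set (List γ)} (h : IsReg L) :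
    IsReg {w : List (σ ⊕ γ) | piOut w ∈ L} := by
  obtain ⟨Q, iQ, M, rfl⟩ := h
  refine ⟨Q, inferInstance, outD M, ?_⟩
  ext w
  rw [DFA.mem_accepts, show (outD (σ := σ) M).eval w = M.evalFrom M.start (piOut w) from
    outD_evalFrom M w M.start]
  exact Iff.rfl

/-! ### concatenation -/

def catL (A B : Set (List α)) : Set (List α) :=
  {x | ∃ u v, u ∈ A ∧ v ∈ B ∧ u ++ v = x}

private def catNFA {Q₁ Q₂ : Type} (M₁ : DFA α Q₁) (M₂ : DFA α Q₂) : NFA α (Q₁ ⊕ Q₂) where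
  step := fun s a =>
    Sum.elim
      (fun q => {Sum.inl (M₁.step q a)} ∪
        {s | q ∈ M₁.accept ∧ s = Sum.inr (M₂.step M₂.start a)})
      (fun r => {Sum.inr (M₂.step r a)}) s
  start := {Sum.inl M₁.start} ∪ {s | M₁.start ∈ M₁.accept ∧ s = Sum.inr M₂.start}
  accept := {s | M₂.start ∈ M₂.accept ∧ ∃ q ∈ M₁.accept, s = Sum.inl q} ∪
    {s | ∃ r ∈ M₂.accept, s = Sum.inr r}

private lemma catNFA_eval {Q₁ Q₂ : Type} (M₁ : DFA α Q₁) (M₂ : DFA α Q₂) (x : List α) :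
    (catNFA M₁ M₂).eval x =
      {Sum.inl (M₁.eval x)} ∪
        {s | ∃ u v, u ++ v = x ∧ u ∈ M₁.accepts ∧ (u = [] ∨ v ≠ []) ∧
          s = Sum.inr (M₂.eval v)} := by
  classical
  induction x using List.reverseRecOn with
  | nil =>
    ext s
    simp only [NFA.eval_nil, catNFA, Set.mem_union, Set.mem_singleton_iff, Set.mem_setOf_eq]
    constructor
    · rintro (h | h)
      · exact Or.inl h
      · right
        exact ⟨[], [], rfl, by rw [DFA.mem_accepts]; exact h.1, Or.inl rfl, h.2⟩
    · rintro (h | ⟨u, v, huv, hu, _, rfl⟩)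
      · exact Or.inl h
      · obtain ⟨hu0, hv0⟩ := List.append_eq_nil_iff.mp huv
        subst hu0; subst hv0
        right
        exact ⟨by rwa [DFA.mem_accepts] at hu, rfl⟩
  | append_singleton x a ih =>
    ext s
    rw [NFA.eval_append_singleton, ih]
    simp only [NFA.mem_stepSet, Set.mem_union, Set.mem_singleton_iff, Set.mem_setOf_eq]
    constructor
    · rintro ⟨t, ht | ⟨u, v, huv, hu, hcase, rfl⟩, hs⟩
      · -- t = inl (M₁.eval x)
        subst ht
        simp only [catNFA, Sum.elim_inl, Set.mem_union, Set.mem_singleton_iff] at hs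
        rcases hs with rfl | hs
        · left; rw [DFA.eval_append_singleton]
        · rw [Set.mem_setOf_eq] at hs
          right
          exact ⟨x, [a], rfl, by rw [DFA.mem_accepts]; exact hs.1, Or.inr (by simp),
            by rw [hs.2]; rfl⟩
      · -- t = inr (M₂.eval v)
        simp only [catNFA, Sum.elim_inr, Set.mem_singleton_iff] at hs
        subst hs
        right
        exact ⟨u, v ++ [a], by rw [← List.append_assoc, huv], hu, Or.inr (by simp),
          by rw [DFA.eval_append_singleton]⟩
    · rintro (rfl | ⟨u, v, huv, hu, hcase, rfl⟩)
      · exact ⟨Sum.inl (M₁.eval x), Or.inl rfl, by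
          simp only [catNFA, Sum.elim_inl, Set.mem_union, Set.mem_singleton_iff]
          left; rw [DFA.eval_append_singleton]⟩
      · -- v must be nonempty
        have hvne : v ≠ [] := by
          rcases hcase with rfl | hv
          · intro hv; subst hv; simp at huv
          · exact hv
        obtain ⟨v', a', rfl⟩ : ∃ v' a', v = v' ++ [a'] := by
          rcases List.eq_nil_or_concat v with h | ⟨v', a', rfl⟩
          · exact absurd h hvne
          · exact ⟨v', a', by simp⟩
        rw [← List.append_assoc] at huv
        obtain ⟨huv', ha⟩ := List.append_inj' huv rfl
        have ha' : a' = a := by simpa using ha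
        subst ha'
        by_cases hv' : v' = []
        · subst hv'
          rcases hcase with rfl | _
          · -- u = [], v' = [] : came from inr (M₂.eval []) present at start side
            refine ⟨Sum.inr (M₂.eval []), Or.inr ⟨[], [], by simpa using huv', hu, Or.inl rfl,
              rfl⟩, ?_⟩
            simp only [catNFA, Sum.elim_inr, Set.mem_singleton_iff]
            rw [DFA.eval_append_singleton]
          · -- u ≠ [] possible: u = x, spawn from inl
            simp only [List.append_nil] at huv'
            subst huv'
            refine ⟨Sum.inl (M₁.eval u), Or.inl rfl, ?_⟩
            simp only [catNFA, Sum.elim_inl, Set.mem_union, Set.mem_singleton_iff]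
            right
            rw [Set.mem_setOf_eq]
            exact ⟨by rwa [DFA.mem_accepts] at hu, by rw [DFA.eval_append_singleton]; rfl⟩
        · refine ⟨Sum.inr (M₂.eval v'), Or.inr ⟨u, v', huv', hu, Or.inr hv', rfl⟩, ?_⟩
          simp only [catNFA, Sum.elim_inr, Set.mem_singleton_iff]
          rw [DFA.eval_append_singleton]

lemma isReg_catL {A B : Set (List α)} (hA : IsReg A) (hB : IsReg B) : IsReg (catL A B) := by
  classical
  obtain ⟨Q₁, i₁, M₁, rfl⟩ := hA
  obtain ⟨Q₂, i₂, M₂, rfl⟩ := hB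
  refine ⟨Set (Q₁ ⊕ Q₂), Set.fintype, (catNFA M₁ M₂).toDFA, ?_⟩
  rw [NFA.toDFA_correct]
  ext x
  rw [show (x ∈ (catNFA M₁ M₂).accepts) ↔ ∃ s ∈ (catNFA M₁ M₂).accept,
      s ∈ (catNFA M₁ M₂).eval x from Iff.rfl]
  constructor
  · rintro ⟨s, hacc, hev⟩
    rw [catNFA_eval] at hev
    simp only [Set.mem_union, Set.mem_singleton_iff, Set.mem_setOf_eq] at hev
    simp only [catNFA, Set.mem_union] at hacc
    rcases hev with rfl | ⟨u, v, huv, hu, _, rfl⟩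
    · rcases hacc with hacc | hacc
      · obtain ⟨hB0, q, hq, hq'⟩ := hacc
        have : M₁.eval x ∈ M₁.accept := by
          have := Sum.inl_injective hq'; rw [this]; exact hq
        exact ⟨x, [], by exact this, by exact hB0, by simp⟩
      · obtain ⟨r, _, hr'⟩ := hacc
        exact absurd hr' (by simp)
    · rcases hacc with hacc | hacc
      · obtain ⟨_, q, _, hq'⟩ := hacc
        exact absurd hq' (by simp)
      · obtain ⟨r, hr, hr'⟩ := hacc
        have : M₂.eval v ∈ M₂.accept := by
          have := Sum.inr_injective hr'; rw [this]; exact hr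
        exact ⟨u, v, hu, by exact this, huv⟩
  · rintro ⟨u, v, hu, hv, rfl⟩
    by_cases hc : u = [] ∨ v ≠ []
    · refine ⟨Sum.inr (M₂.eval v), ?_, ?_⟩
      · simp only [catNFA, Set.mem_union, Set.mem_setOf_eq]
        right
        exact ⟨M₂.eval v, by exact hv, rfl⟩
      · rw [catNFA_eval]
        simp only [Set.mem_union, Set.mem_singleton_iff, Set.mem_setOf_eq]
        exact Or.inr ⟨u, v, rfl, hu, hc, rfl⟩
    · push_neg at hc
      obtain ⟨hune, hv0⟩ := hc
      subst hv0
      refine ⟨Sum.inl (M₁.eval (u ++ [])), ?_, ?_⟩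
      · simp only [catNFA, Set.mem_union, Set.mem_setOf_eq]
        left
        refine ⟨by exact hv, M₁.eval (u ++ []), ?_, rfl⟩
        simp only [List.append_nil]
        exact hu
      · rw [catNFA_eval]
        exact Or.inl rfl


/-! ### chain languages -/

def chainL {Q : Type} (M : DFA α Q) : List (Q × Q) → Set (List α)
  | [] => {[]}
  | c :: l => catL {x | M.evalFrom c.1 x = c.2} (chainL M l)

lemma isReg_chainL {Q : Type} [Fintype Q] (M : DFA α Q) (l : List (Q × Q)) :
    IsReg (chainL M l) := by
  induction l with
  | nil => exact isReg_singleton_nil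
  | cons c l ih => exact isReg_catL (isReg_pairLang M c.1 c.2) ih

/-! ### linked chains -/

def linkedC {Q : Type} (M : DFA (σ ⊕ γ) Q) : Q → List (Q × Q × Q) → Prop
  | q, [] => q ∈ M.accept
  | q, t :: l => t.1 = q ∧ linkedC M t.2.2 l

def xch {Q : Type} (d : List (Q × Q × Q)) : List (Q × Q) := d.map fun t => (t.1, t.2.1)
def ych {Q : Type} (d : List (Q × Q × Q)) : List (Q × Q) := d.map fun t => (t.2.1, t.2.2)

/-- KEY 1: from chain-memberships, build an interleaved word accepted by `M`. -/
lemma key1 {Q : Type} (M : DFA (σ ⊕ γ) Q) :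
    ∀ (d : List (Q × Q × Q)) (q : Q) (x : List σ) (y : List γ),
      linkedC M q d → x ∈ chainL (M.comap Sum.inl) (xch d) →
      y ∈ chainL (M.comap Sum.inr) (ych d) →
      ∃ w, piIn w = x ∧ piOut w = y ∧ M.evalFrom q w ∈ M.accept := by
  intro d
  induction d with
  | nil =>
    intro q x y hl hx hy
    have hx0 : x = [] := hx
    have hy0 : y = [] := hy
    subst hx0; subst hy0
    exact ⟨[], rfl, rfl, hl⟩
  | cons t d ih =>
    rintro q x y ⟨rfl, hl⟩ ⟨u, x', hu, hx', rfl⟩ ⟨v, y', hv, hy', rfl⟩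
    obtain ⟨w', hw1, hw2, hw3⟩ := ih t.2.2 x' y' hl hx' hy'
    refine ⟨u.map Sum.inl ++ v.map Sum.inr ++ w', ?_, ?_, ?_⟩
    · simp [hw1]
    · simp [hw2]
    · rw [DFA.evalFrom_of_append, DFA.evalFrom_of_append]
      rw [Set.mem_setOf_eq, DFA.evalFrom_comap] at hu hv
      rw [hu, hv]
      exact hw3

/-! ### shift count lemmas -/

lemma shiftCount_cons_cons (a b : σ ⊕ γ) (t : List (σ ⊕ γ)) :
    shiftCount (a :: b :: t) =
      shiftCount (b :: t) + (if (a.isLeft != b.isLeft) = true then 1 else 0) := by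
  simp only [shiftCount, List.tail_cons, List.zip_cons_cons, List.countP_cons]

lemma shiftCount_le_cons (a : σ ⊕ γ) (t : List (σ ⊕ γ)) :
    shiftCount t ≤ shiftCount (a :: t) := by
  cases t with
  | nil => exact le_refl 0
  | cons b t => rw [shiftCount_cons_cons]; exact Nat.le_add_right _ _

lemma shiftCount_le_append (u t : List (σ ⊕ γ)) :
    shiftCount t ≤ shiftCount (u ++ t) := by
  induction u with
  | nil => exact le_refl _
  | cons a u ih => exact le_trans ih (shiftCount_le_cons a (u ++ t))

lemma shiftCount_boundary :
    ∀ (u : List (σ ⊕ γ)), u ≠ [] → (∀ l ∈ u, l.isRight) →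
      ∀ (c : σ ⊕ γ) (t : List (σ ⊕ γ)), c.isLeft →
      shiftCount (c :: t) + 1 ≤ shiftCount (u ++ c :: t) := by
  intro u
  induction u with
  | nil => intro h; exact absurd rfl h
  | cons b u ih =>
    intro _ hall c t hc
    cases u with
    | nil =>
      rw [List.singleton_append, shiftCount_cons_cons]
      have hb : b.isRight := hall b (by simp)
      have : (b.isLeft != c.isLeft) = true := by
        cases b with
        | inl a => simp at hb
        | inr b' => cases c with
          | inl a => simp
          | inr c' => simp at hc
      rw [if_pos this]
    | cons b' u' =>
      have h1 := ih (by simp) (fun l hl => hall l (by simp [hl])) c t hc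
      calc shiftCount (c :: t) + 1 ≤ shiftCount (b' :: u' ++ c :: t) := h1
        _ ≤ shiftCount (b :: (b' :: u' ++ c :: t)) := shiftCount_le_cons _ _
        _ = shiftCount ((b :: b' :: u') ++ c :: t) := rfl

/-! ### padding -/

lemma key_pad {Q : Type} (M : DFA (σ ⊕ γ) Q) (q : Q) (hq : q ∈ M.accept) :
    ∀ m : ℕ, ∃ d : List (Q × Q × Q), d.length = m ∧ linkedC M q d ∧
      [] ∈ chainL (M.comap Sum.inl) (xch d) ∧ [] ∈ chainL (M.comap Sum.inr) (ych d) := by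
  intro m
  induction m with
  | zero => exact ⟨[], rfl, hq, rfl, rfl⟩
  | succ m ih =>
    obtain ⟨d, hlen, hl, hx, hy⟩ := ih
    refine ⟨(q, q, q) :: d, by simp [hlen], ⟨rfl, hl⟩, ⟨[], [], rfl, hx, rfl⟩,
      ⟨[], [], rfl, hy, rfl⟩⟩

/-! ### KEY 2: decompose an accepted word with few shifts -/

lemma key2 {Q : Type} (M : DFA (σ ⊕ γ) Q) :
    ∀ (m : ℕ) (w : List (σ ⊕ γ)) (q : Q), shiftCount w < m →
      M.evalFrom q w ∈ M.accept →
      ∃ d : List (Q × Q × Q), d.length = m ∧ linkedC M q d ∧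
        piIn w ∈ chainL (M.comap Sum.inl) (xch d) ∧
        piOut w ∈ chainL (M.comap Sum.inr) (ych d) := by
  intro m
  induction m with
  | zero => intro w q h; exact absurd h (Nat.not_lt_zero _)
  | succ m ih =>
    intro w q hsc hacc
    obtain ⟨x₀, hx₀⟩ : ∃ l, w.takeWhile (fun l => Sum.isLeft l) = l := ⟨_, rfl⟩
    obtain ⟨r, hr⟩ : ∃ l, w.dropWhile (fun l => Sum.isLeft l) = l := ⟨_, rfl⟩
    obtain ⟨y₀, hy₀⟩ : ∃ l, r.takeWhile (fun l => Sum.isRight l) = l := ⟨_, rfl⟩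
    obtain ⟨w', hw'⟩ : ∃ l, r.dropWhile (fun l => Sum.isRight l) = l := ⟨_, rfl⟩
    have hw : x₀ ++ r = w := by rw [← hx₀, ← hr]; exact List.takeWhile_append_dropWhile
    have hrw : y₀ ++ w' = r := by rw [← hy₀, ← hw']; exact List.takeWhile_append_dropWhile
    have hx₀l : ∀ l ∈ x₀, Sum.isLeft l := by
      intro l hl; rw [← hx₀] at hl; exact List.mem_takeWhile_imp hl
    have hy₀r : ∀ l ∈ y₀, Sum.isRight l := by
      intro l hl; rw [← hy₀] at hl; exact List.mem_takeWhile_imp hl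
    have hx₀eq : x₀ = (piIn x₀).map Sum.inl := eq_map_inl_of_allLeft hx₀l
    have hy₀eq : y₀ = (piOut y₀).map Sum.inr := eq_map_inr_of_allRight hy₀r
    obtain ⟨q₁, hq₁⟩ : ∃ s, M.evalFrom q x₀ = s := ⟨_, rfl⟩
    obtain ⟨q₂, hq₂⟩ : ∃ s, M.evalFrom q₁ y₀ = s := ⟨_, rfl⟩
    have heval : M.evalFrom q₂ w' ∈ M.accept := by
      rw [← hq₂, ← hq₁, ← DFA.evalFrom_of_append, ← DFA.evalFrom_of_append, hrw, hw]
      exact hacc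
    have hpiy0 : piIn y₀ = [] := by rw [hy₀eq, piIn_map_inr]
    have hpix0 : piOut x₀ = [] := by rw [hx₀eq, piOut_map_inl]
    have hpiw : piIn w = piIn x₀ ++ piIn w' := by
      conv_lhs => rw [← hw, ← hrw]
      rw [piIn_append, piIn_append, hpiy0, List.nil_append]
    have hpow : piOut w = piOut y₀ ++ piOut w' := by
      conv_lhs => rw [← hw, ← hrw]
      rw [piOut_append, piOut_append, hpix0, List.nil_append]
    have hevx : (M.comap Sum.inl).evalFrom q (piIn x₀) = q₁ := by
      rw [DFA.evalFrom_comap, ← hx₀eq]; exact hq₁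
    have hevy : (M.comap Sum.inr).evalFrom q₁ (piOut y₀) = q₂ := by
      rw [DFA.evalFrom_comap, ← hy₀eq]; exact hq₂
    by_cases hwe : w' = []
    · -- padding case
      have hq₂acc : q₂ ∈ M.accept := by rw [hwe] at heval; exact heval
      obtain ⟨d, hlen, hl, hx, hy⟩ := key_pad M q₂ hq₂acc m
      refine ⟨(q, q₁, q₂) :: d, by simp [hlen], ⟨rfl, hl⟩, ?_, ?_⟩
      · show piIn w ∈ catL {z : List σ | (M.comap Sum.inl).evalFrom q z = q₁}
          (chainL (M.comap Sum.inl) (xch d))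
        exact ⟨piIn x₀, piIn w', hevx, by rw [hwe]; exact hx, hpiw.symm⟩
      · show piOut w ∈ catL {z : List γ | (M.comap Sum.inr).evalFrom q₁ z = q₂}
          (chainL (M.comap Sum.inr) (ych d))
        exact ⟨piOut y₀, piOut w', hevy, by rw [hwe]; exact hy, hpow.symm⟩
    · -- recursive case
      have hrne : r ≠ [] := by
        intro h; rw [h] at hrw
        exact hwe (List.append_eq_nil_iff.mp hrw).2
      have hy₀ne : y₀ ≠ [] := by
        have hdw : w.dropWhile (fun l => Sum.isLeft l) ≠ [] := by rw [hr]; exact hrne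
        have hhead : Sum.isLeft ((w.dropWhile (fun l => Sum.isLeft l)).head hdw) = false :=
          List.head_dropWhile_not _ (l := w) hdw
        obtain ⟨c, t, hct⟩ := List.exists_cons_of_ne_nil hrne
        have hcl : Sum.isLeft c = false := by
          have hrc : (w.dropWhile (fun l => Sum.isLeft l)).head hdw = c := by
            have : w.dropWhile (fun l => Sum.isLeft l) = c :: t := by rw [hr, hct]
            simp [this]
          rw [hrc] at hhead
          exact hhead
        have hcr : Sum.isRight c = true := by
          cases c with
          | inl a => simp at hcl
          | inr b => simp
        rw [← hy₀, hct, List.takeWhile_cons_of_pos hcr]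
        simp
      obtain ⟨c, t, hct⟩ := List.exists_cons_of_ne_nil hwe
      have hcl : Sum.isLeft c = true := by
        have hdw : r.dropWhile (fun l => Sum.isRight l) ≠ [] := by rw [hw']; exact hwe
        have hhead : Sum.isRight ((r.dropWhile (fun l => Sum.isRight l)).head hdw) = false :=
          List.head_dropWhile_not _ (l := r) hdw
        have hrc : (r.dropWhile (fun l => Sum.isRight l)).head hdw = c := by
          have : r.dropWhile (fun l => Sum.isRight l) = c :: t := by rw [hw', hct]
          simp [this]
        rw [hrc] at hhead
        cases c with
        | inl a => simp
        | inr b => simp at hhead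
      have hsc' : shiftCount w' < m := by
        have h1 : shiftCount w' + 1 ≤ shiftCount (y₀ ++ w') := by
          rw [hct]
          exact shiftCount_boundary y₀ hy₀ne hy₀r c t hcl
        have h2 : shiftCount (y₀ ++ w') ≤ shiftCount (x₀ ++ (y₀ ++ w')) :=
          shiftCount_le_append _ _
        have h3 : x₀ ++ (y₀ ++ w') = w := by rw [hrw, hw]
        rw [h3] at h2
        omega
      obtain ⟨d, hlen, hl, hx, hy⟩ := ih w' q₂ hsc' heval
      refine ⟨(q, q₁, q₂) :: d, by simp [hlen], ⟨rfl, hl⟩, ?_, ?_⟩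
      · show piIn w ∈ catL {z : List σ | (M.comap Sum.inl).evalFrom q z = q₁}
          (chainL (M.comap Sum.inl) (xch d))
        exact ⟨piIn x₀, piIn w', hevx, hx, hpiw.symm⟩
      · show piOut w ∈ catL {z : List γ | (M.comap Sum.inr).evalFrom q₁ z = q₂}
          (chainL (M.comap Sum.inr) (ych d))
        exact ⟨piOut y₀, piOut w', hevy, hy, hpow.symm⟩

/-! ### assembling -/

private lemma exists_ofFn_of_len {β : Type} {d : List β} {m : ℕ} (h : d.length = m) :
    ∃ f : Fin m → β, List.ofFn f = d := by
  subst h; exact ⟨d.get, List.ofFn_get d⟩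

/-- the component languages of the recognizable decomposition, at the level of words -/
def WF {Q : Type} (M : DFA (σ ⊕ γ) Q) (m : ℕ) (f : Fin m → Q × Q × Q) :
    Set (List (σ ⊕ γ)) :=
  {w | linkedC M M.start (List.ofFn f) ∧
    piIn w ∈ chainL (M.comap Sum.inl) (xch (List.ofFn f)) ∧
    piOut w ∈ chainL (M.comap Sum.inr) (ych (List.ofFn f))}

lemma isReg_WF {Q : Type} [Fintype Q] (M : DFA (σ ⊕ γ) Q) (m : ℕ)
    (f : Fin m → Q × Q × Q) : IsReg (WF M m f) := by
  classical
  by_cases h : linkedC M M.start (List.ofFn f)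
  · have heq : WF M m f = {w | piIn w ∈ chainL (M.comap Sum.inl) (xch (List.ofFn f))} ∩
        {w | piOut w ∈ chainL (M.comap Sum.inr) (ych (List.ofFn f))} := by
      ext w
      simp only [WF, Set.mem_setOf_eq, Set.mem_inter_iff]
      exact ⟨fun hw => ⟨hw.2.1, hw.2.2⟩, fun hw => ⟨h, hw.1, hw.2⟩⟩
    rw [heq]
    exact isReg_inter (isReg_piIn_preimage (isReg_chainL _ _))
      (isReg_piOut_preimage (isReg_chainL _ _))
  · have heq : WF M m f = ∅ := by
      ext w
      simp only [WF, Set.mem_setOf_eq]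
      exact iff_of_false (fun hw => h hw.1) (fun hw => hw)
    rw [heq]
    exact isReg_empty

lemma syncMem_iff {Q : Type} (M : DFA (σ ⊕ γ) Q) (S : Set (List (σ ⊕ γ)))
    (hM : M.accepts = S) (k : ℕ) (hk : ∀ w ∈ S, shiftCount w ≤ k) (w : List (σ ⊕ γ)) :
    syncPair w ∈ syncRel S ↔ ∃ f : Fin (k + 1) → Q × Q × Q, w ∈ WF M (k + 1) f := by
  have hmemS : ∀ v, v ∈ S ↔ M.evalFrom M.start v ∈ M.accept := by
    intro v; rw [← hM]; exact M.mem_accepts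
  constructor
  · rintro ⟨w₀, hw₀S, heq⟩
    have hpin : piIn w₀ = piIn w := congrArg Prod.fst heq
    have hpout : piOut w₀ = piOut w := congrArg Prod.snd heq
    have hacc : M.evalFrom M.start w₀ ∈ M.accept := (hmemS w₀).1 hw₀S
    have hshift : shiftCount w₀ < k + 1 := Nat.lt_succ_of_le (hk w₀ hw₀S)
    obtain ⟨d, hlen, hl, hx, hy⟩ := key2 M (k + 1) w₀ M.start hshift hacc
    obtain ⟨f, hf⟩ := exists_ofFn_of_len hlen
    refine ⟨f, ?_, ?_, ?_⟩
    · rw [hf]; exact hl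
    · rw [hf, ← hpin]; exact hx
    · rw [hf, ← hpout]; exact hy
  · rintro ⟨f, hl, hx, hy⟩
    obtain ⟨w₀, hw1, hw2, hw3⟩ := key1 M (List.ofFn f) M.start (piIn w) (piOut w) hl hx hy
    refine ⟨w₀, (hmemS w₀).2 hw3, ?_⟩
    show (piIn w₀, piOut w₀) = (piIn w, piOut w)
    rw [hw1, hw2]

end StmtAux


/-- if `S` is regular with finite shift, `T` regular, and `⟦S⟧ ⊆ ⟦T⟧`, then
`U = {w ∈ T | ⟦w⟧ ∈ ⟦S⟧}` is a regular subset of `T` with `⟦U⟧ = ⟦S⟧`. -/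
theorem stmt4 {σ γ : Type} (S T : Set (List (σ ⊕ γ)))
    (hS : IsReg S) (hSfs : FiniteShift S) (hT : IsReg T)
    (hsub : syncRel S ⊆ syncRel T) :
    let U : Set (List (σ ⊕ γ)) := {w | w ∈ T ∧ syncPair w ∈ syncRel S}
    U ⊆ T ∧ IsReg U ∧ syncRel U = syncRel S := by
  intro U
  obtain ⟨Q, iQ, M, hM⟩ := hS
  obtain ⟨k, hk⟩ := hSfs
  haveI := iQ
  refine ⟨fun w hw => hw.1, ?_, ?_⟩
  · have hU : U = T ∩ ⋃ f : Fin (k + 1) → Q × Q × Q, StmtAux.WF M (k + 1) f := by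
      ext w
      show (w ∈ T ∧ syncPair w ∈ syncRel S) ↔ _
      rw [Set.mem_inter_iff, Set.mem_iUnion]
      exact and_congr_right fun _ => StmtAux.syncMem_iff M S hM k hk w
    rw [hU]
    exact StmtAux.isReg_inter hT (StmtAux.isReg_iUnion _ fun f => StmtAux.isReg_WF M _ f)
  · apply Set.Subset.antisymm
    · rintro p ⟨w, hw, rfl⟩
      exact hw.2
    · intro p hp
      obtain ⟨w, hwT, hwp⟩ := hsub hp
      exact ⟨w, ⟨hwT, by rw [hwp]; exact hp⟩, hwp⟩
end

section
/- For the alphabets Σ = {a} and Γ = {b}: the language a*b*a* has infinite lag and shiftlag equal to 2, and the language a*b*a*b* has shiftlag equal to 3. -/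
open List

lemma shiftCount_nil {σ γ : Type} : shiftCount ([] : List (σ ⊕ γ)) = 0 := rfl
lemma shiftCount_single {σ γ : Type} (x : σ ⊕ γ) : shiftCount [x] = 0 := rfl

lemma shiftCount_cons_cons {σ γ : Type} (x y : σ ⊕ γ) (t : List (σ ⊕ γ)) :
    shiftCount (x :: y :: t) = shiftCount (y :: t) + (if x.isLeft != y.isLeft then 1 else 0) := by
  simp [shiftCount, List.countP_cons]

lemma shiftCount_cons_le {σ γ : Type} (x : σ ⊕ γ) (w : List (σ ⊕ γ)) :
    shiftCount (x :: w) ≤ 1 + shiftCount w := by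
  cases w with
  | nil => simp [shiftCount_single, shiftCount_nil]
  | cons y t => rw [shiftCount_cons_cons]; split <;> omega

lemma shiftCount_le_cons {σ γ : Type} (x : σ ⊕ γ) (w : List (σ ⊕ γ)) :
    shiftCount w ≤ shiftCount (x :: w) := by
  cases w with
  | nil => simp [shiftCount_nil]
  | cons y t => rw [shiftCount_cons_cons]; omega

lemma shiftCount_replicate_append {σ γ : Type} (i : ℕ) (x : σ ⊕ γ) (w : List (σ ⊕ γ)) :
    shiftCount (List.replicate i x ++ w) ≤ shiftCount (x :: w) := by
  induction i with
  | zero => simpa using shiftCount_le_cons x w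
  | succ n ih =>
    cases n with
    | zero => simp
    | succ m =>
      have : List.replicate (m + 2) x ++ w = x :: x :: (List.replicate m x ++ w) := by
        simp [List.replicate_succ]
      rw [this, shiftCount_cons_cons]
      have h2 : x :: (List.replicate m x ++ w) = List.replicate (m+1) x ++ w := by
        simp [List.replicate_succ]
      simp only [bne_self_eq_false, if_false, Nat.add_zero, h2]
      exact ih

lemma shiftList_length {σ γ : Type} (w : List (σ ⊕ γ)) :
    (shiftList w).length = shiftCount w := by
  induction w with
  | nil => rfl
  | cons x w ih =>
    rw [shiftList, ← List.countP_eq_length_filter]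
    rw [show (x :: w).length = w.length + 1 from rfl, List.range_succ_eq_map,
      List.countP_cons, List.countP_map]
    have hcomp : ∀ j : ℕ,
        ((fun j => decide (j + 1 < w.length + 1) &&
          decide (((x :: w)[j]?).map Sum.isLeft ≠ ((x :: w)[j + 1]?).map Sum.isLeft))
            ∘ (· + 1)) j
        = (fun j => decide (j + 1 < w.length) &&
          decide ((w[j]?).map Sum.isLeft ≠ (w[j + 1]?).map Sum.isLeft)) j := by
      intro j
      simp only [Function.comp]
      congr 1
      · simp
    rw [List.countP_congr (fun j _ => by rw [hcomp j])]
    rw [List.countP_eq_length_filter, ← shiftList, ih]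
    cases w with
    | nil => simp [shiftCount_nil, shiftCount_single]
    | cons y t =>
      rw [shiftCount_cons_cons]
      have : (decide (0 + 1 < (y :: t).length + 1) &&
          decide (((x :: y :: t)[0]?).map Sum.isLeft
            ≠ ((x :: y :: t)[0 + 1]?).map Sum.isLeft))
          = (x.isLeft != y.isLeft) := by
        rcases x with x|x <;> rcases y with y|y <;> simp
      rw [this]

lemma shiftlagW_le_of_shiftCount_le {σ γ : Type} (w : List (σ ⊕ γ)) (m : ℕ)
    (h : shiftCount w ≤ m) : shiftlagW w ≤ m := by
  apply csSup_le'
  rintro n ⟨l, hinf, hlen, -⟩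
  calc n = l.length := hlen.symm
    _ ≤ (shiftList w).length := hinf.length_le
    _ = shiftCount w := shiftList_length w
    _ ≤ m := h

lemma le_shiftlagW {σ γ : Type} (w : List (σ ⊕ γ)) (n m : ℕ)
    (hb : shiftCount w ≤ m)
    (hmem : ∃ l : List ℕ, l <:+: shiftList w ∧ l.length = n ∧ ∀ j ∈ l, n ≤ lagAt w (j + 1)) :
    n ≤ shiftlagW w := by
  unfold shiftlagW
  have hbdd : BddAbove {n : ℕ | ∃ l : List ℕ, l <:+: shiftList w ∧ l.length = n ∧
      ∀ j ∈ l, n ≤ lagAt w (j + 1)} := by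
    refine ⟨m, ?_⟩
    rintro k ⟨l, hinf, hlen, -⟩
    exact hlen ▸ (hinf.length_le.trans ((shiftList_length w) ▸ hb))
  exact le_csSup hbdd (show n ∈ {n : ℕ | ∃ l : List ℕ, l <:+: shiftList w ∧ l.length = n ∧
      ∀ j ∈ l, n ≤ lagAt w (j + 1)} from hmem)

/-- over `Σ = {a}`, `Γ = {b}`, the language `a*b*a*` has infinite lag and
shiftlag `2`, and `a*b*a*b*` has shiftlag `3`. -/
theorem stmt5 :
    let a : Unit ⊕ Unit := Sum.inl ()
    let b : Unit ⊕ Unit := Sum.inr ()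
    let L1 : Set (List (Unit ⊕ Unit)) :=
      {w | ∃ i j k, w = List.replicate i a ++ List.replicate j b ++ List.replicate k a}
    let L2 : Set (List (Unit ⊕ Unit)) :=
      {w | ∃ i j k l, w = List.replicate i a ++ List.replicate j b ++
            List.replicate k a ++ List.replicate l b}
    ¬ FiniteLag L1 ∧
    (∀ w ∈ L1, shiftlagW w ≤ 2) ∧ (∃ w ∈ L1, 2 ≤ shiftlagW w) ∧
    (∀ w ∈ L2, shiftlagW w ≤ 3) ∧ (∃ w ∈ L2, 3 ≤ shiftlagW w) := by
  intro a b L1 L2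
  have hrep : ∀ (k : ℕ) (x : Unit ⊕ Unit) (w : List (Unit ⊕ Unit)),
      shiftCount (List.replicate k x ++ w) ≤ 1 + shiftCount w := by
    intro k x w
    exact (shiftCount_replicate_append k x w).trans (shiftCount_cons_le x w)
  have hrep0 : ∀ (k : ℕ) (x : Unit ⊕ Unit), shiftCount (List.replicate k x) = 0 := by
    intro k x
    have := shiftCount_replicate_append k x []
    simpa [shiftCount_single] using this
  refine ⟨?_, ?_, ?_, ?_, ?_⟩
  · rintro ⟨K, hK⟩
    have hmem : List.replicate (K + 1) a ∈ L1 := ⟨K + 1, 0, 0, by simp⟩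
    have h1 : lagAt (List.replicate (K + 1) a) (K + 1) = K + 1 := by
      unfold lagAt
      rw [List.take_of_length_le (by simp)]
      simp [a, List.countP_replicate, Sum.isLeft, Sum.isRight]
      omega
    have h2 : K + 1 ≤ lagW (List.replicate (K + 1) a) := by
      have := Finset.le_sup (f := lagAt (List.replicate (K + 1) a))
        (Finset.mem_range.mpr (show K + 1 < (List.replicate (K+1) a).length + 1 by simp))
      rw [h1] at this
      exact this
    have := (h2.trans (hK _ hmem))
    omega
  · rintro w ⟨i, j, k, rfl⟩
    apply shiftlagW_le_of_shiftCount_le _ 2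
    rw [List.append_assoc]
    calc shiftCount (List.replicate i a ++ (List.replicate j b ++ List.replicate k a))
        ≤ 1 + shiftCount (List.replicate j b ++ List.replicate k a) := hrep _ _ _
      _ ≤ 1 + (1 + shiftCount (List.replicate k a)) := by
          have := hrep j b (List.replicate k a); omega
      _ = 2 := by rw [hrep0]
  · refine ⟨List.replicate 2 a ++ List.replicate 4 b ++ List.replicate 2 a,
      ⟨2, 4, 2, rfl⟩, ?_⟩
    apply le_shiftlagW _ 2 2
    · rw [List.append_assoc]
      calc shiftCount (List.replicate 2 a ++ (List.replicate 4 b ++ List.replicate 2 a))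
          ≤ 1 + shiftCount (List.replicate 4 b ++ List.replicate 2 a) := hrep _ _ _
        _ ≤ 1 + (1 + shiftCount (List.replicate 2 a)) := by
            have := hrep 4 b (List.replicate 2 a); omega
        _ = 2 := by rw [hrep0]
    · exact ⟨shiftList (List.replicate 2 a ++ List.replicate 4 b ++ List.replicate 2 a),
        List.infix_rfl, by decide, by decide⟩
  · rintro w ⟨i, j, k, l, rfl⟩
    apply shiftlagW_le_of_shiftCount_le _ 3
    rw [List.append_assoc, List.append_assoc]
    calc shiftCount (List.replicate i a ++
          (List.replicate j b ++ (List.replicate k a ++ List.replicate l b)))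
        ≤ 1 + shiftCount (List.replicate j b ++ (List.replicate k a ++ List.replicate l b)) :=
          hrep _ _ _
      _ ≤ 1 + (1 + shiftCount (List.replicate k a ++ List.replicate l b)) := by
          have := hrep j b (List.replicate k a ++ List.replicate l b); omega
      _ ≤ 1 + (1 + (1 + shiftCount (List.replicate l b))) := by
          have := hrep k a (List.replicate l b); omega
      _ = 3 := by rw [hrep0]
  · refine ⟨List.replicate 3 a ++ List.replicate 6 b ++ List.replicate 6 a
        ++ List.replicate 3 b, ⟨3, 6, 6, 3, rfl⟩, ?_⟩
    apply le_shiftlagW _ 3 3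
    · rw [List.append_assoc, List.append_assoc]
      calc shiftCount (List.replicate 3 a ++
            (List.replicate 6 b ++ (List.replicate 6 a ++ List.replicate 3 b)))
          ≤ 1 + shiftCount (List.replicate 6 b ++ (List.replicate 6 a ++ List.replicate 3 b)) :=
            hrep _ _ _
        _ ≤ 1 + (1 + shiftCount (List.replicate 6 a ++ List.replicate 3 b)) := by
            have := hrep 6 b (List.replicate 6 a ++ List.replicate 3 b); omega
        _ ≤ 1 + (1 + (1 + shiftCount (List.replicate 3 b))) := by
            have := hrep 6 a (List.replicate 3 b); omega
        _ = 3 := by rw [hrep0]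
    · exact ⟨shiftList (List.replicate 3 a ++ List.replicate 6 b ++ List.replicate 6 a
          ++ List.replicate 3 b), List.infix_rfl, by decide, by decide⟩
end

section
/- Let Σ = {a}, Γ = {b}, S = (ab)* + (ab)*(aa a* + bb b*), and T = a*b* + (ab)*(aa a* + bb b*). Then the set T' = {uv | u ∈ a*, v ∈ b*, (|u| − |v|) mod 2 = 0} ∪ (ab)*(aa a* + bb b*) is a regular subset of T satisfying ⟦T'⟧ = ⟦S⟧; in particular ⟦S⟧ ∈ Rel(T). -/
open List

/-- `(ab)^n` for `Σ = {a}`, `Γ = {b}`. -/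
def abRep (n : ℕ) : List (Unit ⊕ Unit) :=
  (List.replicate n ([Sum.inl (), Sum.inr ()] : List (Unit ⊕ Unit))).flatten

namespace Stmt7Aux

abbrev Sy := Unit ⊕ Unit
notation "aL" => (Sum.inl () : Sy)
notation "bL" => (Sum.inr () : Sy)

lemma abRep_zero : abRep 0 = [] := rfl
lemma abRep_succ (k : ℕ) : abRep (k+1) = aL :: bL :: abRep k := by
  simp [abRep, List.replicate_succ]
lemma abRep_succ' (k : ℕ) : abRep (k+1) = abRep k ++ [aL, bL] := by
  simp [abRep, List.replicate_succ']

lemma piIn_rep_a (m : ℕ) : piIn (List.replicate m aL) = List.replicate m () := by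
  induction m with
  | zero => rfl
  | succ m ih => simpa [piIn, List.replicate_succ] using ih
lemma piIn_rep_b (m : ℕ) : piIn (List.replicate m bL) = [] := by
  induction m with
  | zero => rfl
  | succ m ih => simp [piIn, List.replicate_succ]
lemma piOut_rep_b (m : ℕ) : piOut (List.replicate m bL) = List.replicate m () := by
  induction m with
  | zero => rfl
  | succ m ih => simpa [piOut, List.replicate_succ] using ih
lemma piOut_rep_a (m : ℕ) : piOut (List.replicate m aL) = [] := by
  induction m with
  | zero => rfl
  | succ m ih => simp [piOut, List.replicate_succ]

lemma piIn_abRep (k : ℕ) : piIn (abRep k) = List.replicate k () := by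
  induction k with
  | zero => rfl
  | succ k ih => simp [abRep_succ, piIn, List.replicate_succ] at ih ⊢; exact ih
lemma piOut_abRep (k : ℕ) : piOut (abRep k) = List.replicate k () := by
  induction k with
  | zero => rfl
  | succ k ih => simp [abRep_succ, piOut, List.replicate_succ, List.filterMap_cons] at ih ⊢; exact ih

lemma piIn_append (u v : List Sy) : piIn (u ++ v) = piIn u ++ piIn v := by
  simp [piIn]
lemma piOut_append (u v : List Sy) : piOut (u ++ v) = piOut u ++ piOut v := by
  simp [piOut]

lemma syncPair_ab (m n : ℕ) :
    syncPair (List.replicate m aL ++ List.replicate n bL)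
      = (List.replicate m (), List.replicate n ()) := by
  simp [syncPair, piIn_append, piOut_append, piIn_rep_a, piIn_rep_b, piOut_rep_a, piOut_rep_b]

lemma syncPair_abRep (k : ℕ) :
    syncPair (abRep k) = (List.replicate k (), List.replicate k ()) := by
  simp [syncPair, piIn_abRep, piOut_abRep]

lemma syncPair_ub_a (k m : ℕ) :
    syncPair (abRep k ++ List.replicate m aL)
      = (List.replicate (k+m) (), List.replicate k ()) := by
  rw [List.replicate_add]
  simp [syncPair, piIn_append, piOut_append, piIn_abRep, piOut_abRep, piIn_rep_a, piOut_rep_a]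

lemma syncPair_ub_b (k m : ℕ) :
    syncPair (abRep k ++ List.replicate m bL)
      = (List.replicate k (), List.replicate (k+m) ()) := by
  rw [List.replicate_add]
  simp [syncPair, piIn_append, piOut_append, piIn_abRep, piOut_abRep, piIn_rep_b, piOut_rep_b]

end Stmt7Aux

namespace Stmt7Aux

inductive St : Type
  | s0 | a1 | A0 | A1 | b1 | ab | ab2 | abA | AcA | AcB | P0 | P1 | dd
  deriving DecidableEq

instance : Fintype St :=
  ⟨{.s0, .a1, .A0, .A1, .b1, .ab, .ab2, .abA, .AcA, .AcB, .P0, .P1, .dd}, fun x => by cases x <;> simp⟩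

def step : St → Sy → St
  | .s0, .inl _ => .a1
  | .s0, .inr _ => .b1
  | .a1, .inl _ => .A0
  | .a1, .inr _ => .ab
  | .A0, .inl _ => .A1
  | .A0, .inr _ => .P1
  | .A1, .inl _ => .A0
  | .A1, .inr _ => .P0
  | .b1, .inl _ => .dd
  | .b1, .inr _ => .AcB
  | .ab, .inl _ => .abA
  | .ab, .inr _ => .b1
  | .ab2, .inl _ => .abA
  | .ab2, .inr _ => .b1
  | .abA, .inl _ => .AcA
  | .abA, .inr _ => .ab2
  | .AcA, .inl _ => .AcA
  | .AcA, .inr _ => .dd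
  | .AcB, .inl _ => .dd
  | .AcB, .inr _ => .AcB
  | .P0, .inl _ => .dd
  | .P0, .inr _ => .P1
  | .P1, .inl _ => .dd
  | .P1, .inr _ => .P0
  | .dd, _ => .dd

def acc : St → Prop
  | .s0 | .A0 | .A1 | .ab | .AcA | .AcB | .P0 => True
  | _ => False

def M : DFA Sy St := ⟨step, St.s0, {s | acc s}⟩

-- evaluation lemmas
lemma foldA (j : ℕ) :
    List.foldl step .A0 (List.replicate j aL) = (if j % 2 = 0 then .A0 else .A1) ∧
    List.foldl step .A1 (List.replicate j aL) = (if j % 2 = 0 then .A1 else .A0) := by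
  induction j with
  | zero => simp
  | succ j ih =>
    obtain ⟨ih1, ih2⟩ := ih
    rcases Nat.mod_two_eq_zero_or_one j with h | h <;>
      simp only [h] at ih1 ih2 <;>
      simp [List.replicate_succ, step, ih1, ih2, h, Nat.succ_mod_two_eq_zero_iff,
        Nat.succ_mod_two_eq_one_iff]

lemma foldP (j : ℕ) :
    List.foldl step .P0 (List.replicate j bL) = (if j % 2 = 0 then .P0 else .P1) ∧
    List.foldl step .P1 (List.replicate j bL) = (if j % 2 = 0 then .P1 else .P0) := by
  induction j with
  | zero => simp
  | succ j ih =>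
    obtain ⟨ih1, ih2⟩ := ih
    rcases Nat.mod_two_eq_zero_or_one j with h | h <;>
      simp only [h] at ih1 ih2 <;>
      simp [List.replicate_succ, step, ih1, ih2, h, Nat.succ_mod_two_eq_zero_iff,
        Nat.succ_mod_two_eq_one_iff]

lemma foldAcA (j : ℕ) : List.foldl step .AcA (List.replicate j aL) = .AcA := by
  induction j with
  | zero => rfl
  | succ j ih => simpa [List.replicate_succ, step] using ih

lemma foldAcB (j : ℕ) : List.foldl step .AcB (List.replicate j bL) = .AcB := by
  induction j with
  | zero => rfl
  | succ j ih => simpa [List.replicate_succ, step] using ih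

lemma foldab2 (k : ℕ) : List.foldl step .ab2 (abRep k) = .ab2 := by
  induction k with
  | zero => rfl
  | succ k ih => simpa [abRep_succ, step] using ih

lemma fold_s0_abRep (k : ℕ) :
    List.foldl step .s0 (abRep k) =
      (if k = 0 then .s0 else if k = 1 then .ab else .ab2) := by
  match k with
  | 0 => rfl
  | 1 => rfl
  | (k+2) =>
    have : abRep (k+2) = aL :: bL :: aL :: bL :: abRep k := by
      rw [abRep_succ, abRep_succ]
    rw [this]
    simpa [step] using foldab2 k

-- the invariant
def Inv : St → List Sy → Prop
  | .s0, w => w = []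
  | .a1, w => w = [aL]
  | .A0, w => ∃ m, 2 ≤ m ∧ m % 2 = 0 ∧ w = List.replicate m aL
  | .A1, w => ∃ m, 2 ≤ m ∧ m % 2 = 1 ∧ w = List.replicate m aL
  | .b1, w => ∃ k, w = abRep k ++ [bL]
  | .ab, w => w = abRep 1
  | .ab2, w => ∃ k, 2 ≤ k ∧ w = abRep k
  | .abA, w => ∃ k, 1 ≤ k ∧ w = abRep k ++ [aL]
  | .AcA, w => ∃ k m, 1 ≤ k ∧ 2 ≤ m ∧ w = abRep k ++ List.replicate m aL
  | .AcB, w => ∃ k m, 2 ≤ m ∧ w = abRep k ++ List.replicate m bL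
  | .P0, w => ∃ m n, 2 ≤ m ∧ 1 ≤ n ∧ m % 2 = n % 2 ∧
      w = List.replicate m aL ++ List.replicate n bL
  | .P1, w => ∃ m n, 2 ≤ m ∧ 1 ≤ n ∧ ¬ (m % 2 = n % 2) ∧
      w = List.replicate m aL ++ List.replicate n bL
  | .dd, _ => True

lemma rep_snoc (m : ℕ) (x : Sy) :
    List.replicate m x ++ [x] = List.replicate (m+1) x := by
  rw [List.replicate_succ']

lemma inv_step (s : St) (x : Sy) (w : List Sy) (h : Inv s w) : Inv (step s x) (w ++ [x]) := by
  obtain ⟨⟨⟩⟩ | ⟨⟨⟩⟩ := x <;> cases s <;> simp only [step, Inv] at h ⊢ <;> try trivial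
  case inl.s0 => subst h; rfl
  case inr.s0 => exact ⟨0, by subst h; rfl⟩
  case inl.a1 => subst h; exact ⟨2, by norm_num, by norm_num, by simp [rep_snoc]⟩
  case inr.a1 => subst h; rfl
  case inl.A0 =>
    obtain ⟨m, h2, hp, rfl⟩ := h
    exact ⟨m+1, by omega, by omega, by rw [rep_snoc]⟩
  case inr.A0 =>
    obtain ⟨m, h2, hp, rfl⟩ := h
    exact ⟨m, 1, h2, le_refl 1, by omega, by simp⟩
  case inl.A1 =>
    obtain ⟨m, h2, hp, rfl⟩ := h
    exact ⟨m+1, by omega, by omega, by rw [rep_snoc]⟩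
  case inr.A1 =>
    obtain ⟨m, h2, hp, rfl⟩ := h
    exact ⟨m, 1, h2, le_refl 1, by omega, by simp⟩
  case inr.b1 =>
    obtain ⟨k, rfl⟩ := h
    exact ⟨k, 2, le_refl 2, by simp [List.replicate]⟩
  case inl.ab => subst h; exact ⟨1, le_refl 1, rfl⟩
  case inr.ab => subst h; exact ⟨1, rfl⟩
  case inl.ab2 =>
    obtain ⟨k, h2, rfl⟩ := h
    exact ⟨k, by omega, rfl⟩
  case inr.ab2 =>
    obtain ⟨k, h2, rfl⟩ := h
    exact ⟨k, rfl⟩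
  case inl.abA =>
    obtain ⟨k, h1, rfl⟩ := h
    exact ⟨k, 2, h1, le_refl 2, by simp [List.replicate]⟩
  case inr.abA =>
    obtain ⟨k, h1, rfl⟩ := h
    exact ⟨k+1, by omega, by rw [abRep_succ']; simp⟩
  case inl.AcA =>
    obtain ⟨k, m, h1, h2, rfl⟩ := h
    exact ⟨k, m+1, h1, by omega, by rw [List.append_assoc, rep_snoc]⟩
  case inr.AcB =>
    obtain ⟨k, m, h2, rfl⟩ := h
    exact ⟨k, m+1, by omega, by rw [List.append_assoc, rep_snoc]⟩
  case inr.P0 =>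
    obtain ⟨m, n, h2, h1, hp, rfl⟩ := h
    exact ⟨m, n+1, h2, by omega, by omega, by rw [List.append_assoc, rep_snoc]⟩
  case inr.P1 =>
    obtain ⟨m, n, h2, h1, hp, rfl⟩ := h
    exact ⟨m, n+1, h2, by omega, by omega, by rw [List.append_assoc, rep_snoc]⟩

lemma inv_eval (w : List Sy) : Inv (List.foldl step .s0 w) w := by
  induction w using List.reverseRecOn with
  | nil => rfl
  | append_singleton l x ih =>
    rw [List.foldl_append]
    exact inv_step _ x l ih

end Stmt7Aux

namespace Stmt7Aux

def Ub' : Set (List Sy) :=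
  {w | ∃ n m, 2 ≤ m ∧
    (w = abRep n ++ List.replicate m aL ∨ w = abRep n ++ List.replicate m bL)}
def Tp : Set (List Sy) :=
  {w | ∃ m n, m % 2 = n % 2 ∧ w = List.replicate m aL ++ List.replicate n bL} ∪ Ub'
def Sp : Set (List Sy) := {w | ∃ n, w = abRep n} ∪ Ub'

lemma mem_imp_acc : ∀ w ∈ Tp, acc (List.foldl step .s0 w) := by
  rintro w (⟨m, n, hp, rfl⟩ | ⟨k, m, h2, (rfl | rfl)⟩)
  · rw [List.foldl_append]
    rcases Nat.lt_or_ge m 2 with hm | hm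
    · interval_cases m
      · simp only [List.replicate_zero, List.foldl_nil]
        rcases Nat.eq_zero_or_pos n with rfl | hn
        · trivial
        · obtain ⟨n', rfl⟩ : ∃ n', n = n' + 2 := ⟨n - 2, by omega⟩
          simp only [List.replicate_succ, List.foldl_cons, step]
          rw [foldAcB]; trivial
      · rcases Nat.eq_or_lt_of_le (show 1 ≤ n by omega) with h1 | h1
        · subst h1
          simp [List.replicate_succ, step]; trivial
        · obtain ⟨n', rfl⟩ : ∃ n', n = n' + 3 := ⟨n - 3, by omega⟩
          simp only [List.replicate_succ, List.replicate_zero, List.foldl_cons,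
            List.foldl_nil, step]
          rw [foldAcB]; trivial
    · obtain ⟨m', rfl⟩ : ∃ m', m = m' + 2 := ⟨m - 2, by omega⟩
      simp only [List.replicate_succ, List.foldl_cons, step]
      rcases Nat.eq_zero_or_pos n with rfl | hn
      · rcases Nat.mod_two_eq_zero_or_one m' with h | h <;>
          simp [(foldA m').1, h] <;> trivial
      · obtain ⟨n', rfl⟩ : ∃ n', n = n' + 1 := ⟨n - 1, by omega⟩
        rcases Nat.mod_two_eq_zero_or_one m' with h | h <;>
          rw [(foldA m').1] <;> simp only [h] <;> norm_num <;>
          simp only [List.replicate_succ, List.foldl_cons, step]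
        · have hn' : n' % 2 = 1 := by omega
          rw [(foldP n').2]; simp [hn']; trivial
        · have hn' : n' % 2 = 0 := by omega
          rw [(foldP n').1]; simp [hn']; trivial
  · rw [List.foldl_append]
    obtain ⟨m', rfl⟩ : ∃ m', m = m' + 2 := ⟨m - 2, by omega⟩
    match k with
    | 0 =>
      simp only [abRep_zero, List.foldl_nil, List.replicate_succ, List.foldl_cons, step]
      rcases Nat.mod_two_eq_zero_or_one m' with h | h <;>
        simp [(foldA m').1, h] <;> trivial
    | 1 =>
      rw [fold_s0_abRep]
      simp only [List.replicate_succ, List.foldl_cons]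
      norm_num [step]
      rw [foldAcA]; trivial
    | (k+2) =>
      rw [fold_s0_abRep, if_neg (by omega), if_neg (by omega)]
      simp only [List.replicate_succ, List.replicate_zero, List.foldl_cons,
        List.foldl_nil, step]
      rw [foldAcA]; trivial
  · rw [List.foldl_append]
    obtain ⟨m', rfl⟩ : ∃ m', m = m' + 2 := ⟨m - 2, by omega⟩
    match k with
    | 0 =>
      simp only [abRep_zero, List.foldl_nil, List.replicate_succ, List.foldl_cons, step]
      rw [foldAcB]; trivial
    | 1 =>
      rw [fold_s0_abRep]
      simp only [List.replicate_succ, List.foldl_cons]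
      norm_num [step]
      rw [foldAcB]; trivial
    | (k+2) =>
      rw [fold_s0_abRep, if_neg (by omega), if_neg (by omega)]
      simp only [List.replicate_succ, List.replicate_zero, List.foldl_cons,
        List.foldl_nil, step]
      rw [foldAcB]; trivial

lemma accepts_eq : M.accepts = Tp := by
  ext w
  constructor
  · intro hw
    have hacc : acc (List.foldl step .s0 w) := hw
    have hinv := inv_eval w
    cases hs : List.foldl step .s0 w <;> rw [hs] at hacc hinv <;>
      simp only [Inv] at hinv
    · exact Or.inl ⟨0, 0, rfl, by simpa using hinv⟩
    · exact hacc.elim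
    · obtain ⟨m, h2, _, rfl⟩ := hinv
      exact Or.inr ⟨0, m, h2, Or.inl (by simp [abRep_zero])⟩
    · obtain ⟨m, h2, _, rfl⟩ := hinv
      exact Or.inr ⟨0, m, h2, Or.inl (by simp [abRep_zero])⟩
    · exact hacc.elim
    · exact Or.inl ⟨1, 1, rfl, by rw [hinv]; rfl⟩
    · exact hacc.elim
    · exact hacc.elim
    · obtain ⟨k, m, _, h2, rfl⟩ := hinv
      exact Or.inr ⟨k, m, h2, Or.inl rfl⟩
    · obtain ⟨k, m, h2, rfl⟩ := hinv
      exact Or.inr ⟨k, m, h2, Or.inr rfl⟩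
    · obtain ⟨m, n, _, _, hp, rfl⟩ := hinv
      exact Or.inl ⟨m, n, hp, rfl⟩
    · exact hacc.elim
    · exact hacc.elim
  · intro hw
    exact mem_imp_acc w hw

lemma sub1 : syncPair '' Tp ⊆ syncPair '' Sp := by
  rintro p ⟨w, hw, rfl⟩
  rcases hw with ⟨m, n, hp, rfl⟩ | hub
  · rcases lt_trichotomy m n with h | h | h
    · have hd : 2 ≤ n - m := by omega
      have he : m + (n - m) = n := by omega
      refine ⟨abRep m ++ List.replicate (n - m) bL, Or.inr ⟨m, n - m, hd, Or.inr rfl⟩, ?_⟩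
      rw [syncPair_ub_b, he, syncPair_ab]
    · subst h
      exact ⟨abRep m, Or.inl ⟨m, rfl⟩, by rw [syncPair_abRep, syncPair_ab]⟩
    · have hd : 2 ≤ m - n := by omega
      have he : n + (m - n) = m := by omega
      refine ⟨abRep n ++ List.replicate (m - n) aL, Or.inr ⟨n, m - n, hd, Or.inl rfl⟩, ?_⟩
      rw [syncPair_ub_a, he, syncPair_ab]
  · exact ⟨w, Or.inr hub, rfl⟩

lemma sub2 : syncPair '' Sp ⊆ syncPair '' Tp := by
  rintro p ⟨w, hw, rfl⟩
  rcases hw with ⟨n, rfl⟩ | hub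
  · exact ⟨List.replicate n aL ++ List.replicate n bL, Or.inl ⟨n, n, rfl, rfl⟩,
      by rw [syncPair_ab, syncPair_abRep]⟩
  · exact ⟨w, Or.inr hub, rfl⟩

end Stmt7Aux


/-- for `S = (ab)* + (ab)*(aaa* + bbb*)` and `T = a*b* + (ab)*(aaa* + bbb*)`,
the set `T' = {uv | u ∈ a*, v ∈ b*, |u| ≡ |v| (mod 2)} ∪ (ab)*(aaa* + bbb*)` is a regular
subset of `T` with `⟦T'⟧ = ⟦S⟧`; in particular `⟦S⟧ ∈ Rel(T)`. -/
theorem stmt7 :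
    let a : Unit ⊕ Unit := Sum.inl ()
    let b : Unit ⊕ Unit := Sum.inr ()
    let Ub : Set (List (Unit ⊕ Unit)) :=
      {w | ∃ n m, 2 ≤ m ∧
        (w = abRep n ++ List.replicate m a ∨ w = abRep n ++ List.replicate m b)}
    let S : Set (List (Unit ⊕ Unit)) := {w | ∃ n, w = abRep n} ∪ Ub
    let T : Set (List (Unit ⊕ Unit)) :=
      {w | ∃ m n, w = List.replicate m a ++ List.replicate n b} ∪ Ub
    let T' : Set (List (Unit ⊕ Unit)) :=
      {w | ∃ m n, m % 2 = n % 2 ∧ w = List.replicate m a ++ List.replicate n b} ∪ Ub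
    T' ⊆ T ∧ IsReg T' ∧ syncRel T' = syncRel S ∧ syncRel S ∈ RelOf T := by
  intro a b Ub S T T'
  have hsub : T' ⊆ T := by
    rintro w (⟨m, n, _, rfl⟩ | h)
    · exact Or.inl ⟨m, n, rfl⟩
    · exact Or.inr h
  have hreg : IsReg T' := ⟨Stmt7Aux.St, inferInstance, Stmt7Aux.M, Stmt7Aux.accepts_eq⟩
  have heq : syncRel T' = syncRel S :=
    Set.Subset.antisymm Stmt7Aux.sub1 Stmt7Aux.sub2
  exact ⟨hsub, hreg, heq, ⟨T', hsub, hreg, heq⟩⟩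
end

section
/- Let x, y ∈ (Σ∪Γ)* be compatible words with lag(x) ≤ k and lag(y) ≤ k, and let diff(x,y) = (u,v). Then |u| ≤ k and |v| ≤ k. -/
open List

lemma piIn_append' {σ γ : Type} (w w' : List (σ ⊕ γ)) :
    piIn (w ++ w') = piIn w ++ piIn w' := List.filterMap_append ..

lemma piOut_append' {σ γ : Type} (w w' : List (σ ⊕ γ)) :
    piOut (w ++ w') = piOut w ++ piOut w' := List.filterMap_append ..

lemma piIn_map_inl {σ γ : Type} (l : List σ) :
    piIn (l.map (Sum.inl : σ → σ ⊕ γ)) = l := by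
  induction l <;> simp_all [piIn]

lemma piIn_map_inr {σ γ : Type} (l : List γ) :
    piIn (l.map (Sum.inr : γ → σ ⊕ γ)) = [] := by
  induction l <;> simp_all [piIn]

lemma piOut_map_inl {σ γ : Type} (l : List σ) :
    piOut (l.map (Sum.inl : σ → σ ⊕ γ)) = [] := by
  induction l <;> simp_all [piOut]

lemma piOut_map_inr {σ γ : Type} (l : List γ) :
    piOut (l.map (Sum.inr : γ → σ ⊕ γ)) = l := by
  induction l <;> simp_all [piOut]

lemma countP_isLeft_eq {σ γ : Type} (w : List (σ ⊕ γ)) :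
    w.countP Sum.isLeft = (piIn w).length := by
  induction w with
  | nil => rfl
  | cons a t ih => cases a <;> simp_all [piIn, List.countP_cons, List.filterMap_cons]

lemma countP_isRight_eq {σ γ : Type} (w : List (σ ⊕ γ)) :
    w.countP Sum.isRight = (piOut w).length := by
  induction w with
  | nil => rfl
  | cons a t ih => cases a <;> simp_all [piOut, List.countP_cons, List.filterMap_cons]

lemma length_piIn_add_piOut {σ γ : Type} (w : List (σ ⊕ γ)) :
    (piIn w).length + (piOut w).length = w.length := by
  induction w with
  | nil => rfl
  | cons a t ih => cases a <;> simp_all [piIn, piOut, List.filterMap_cons] <;> omega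

lemma lagAt_full {σ γ : Type} (w : List (σ ⊕ γ)) :
    lagAt w w.length = (((piIn w).length : ℤ) - ((piOut w).length : ℤ)).natAbs := by
  simp [lagAt, List.take_length, countP_isLeft_eq, countP_isRight_eq]

lemma lag_full_le {σ γ : Type} {w : List (σ ⊕ γ)} {k : ℕ} (h : lagW w ≤ k) :
    (((piIn w).length : ℤ) - ((piOut w).length : ℤ)).natAbs ≤ k := by
  rw [← lagAt_full]
  exact le_trans (Finset.le_sup (f := lagAt w) (by simp)) h

lemma stmt13_aux {σ γ : Type} (x y u v : List (σ ⊕ γ)) (k : ℕ)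
    (hc : Compatible x y) (hd : IsDiff x y u v)
    (hx : lagW x ≤ k) (hy : lagW y ≤ k)
    (hab : (piIn y).length ≤ (piIn x).length) :
    u.length ≤ k ∧ v.length ≤ k := by
  obtain ⟨hlen, u₁, v₁, h1⟩ := hc
  have hIn : piIn x ++ piIn u₁ = piIn y ++ piIn v₁ := by
    have := congrArg Prod.fst h1
    simpa [syncPair, piIn_append'] using this
  have hOut : piOut x ++ piOut u₁ = piOut y ++ piOut v₁ := by
    have := congrArg Prod.snd h1
    simpa [syncPair, piOut_append'] using this
  have hpx : piIn y <+: piIn x :=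
    List.prefix_of_prefix_length_le (l₃ := piIn x ++ piIn u₁)
      (by rw [hIn]; exact List.prefix_append _ _) (List.prefix_append _ _) hab
  have hsum : (piIn x).length + (piOut x).length = (piIn y).length + (piOut y).length := by
    rw [length_piIn_add_piOut, length_piIn_add_piOut, hlen]
  have hpy : piOut x <+: piOut y :=
    List.prefix_of_prefix_length_le (l₃ := piOut x ++ piOut u₁)
      (List.prefix_append _ _) (by rw [hOut]; exact List.prefix_append _ _) (by omega)
  obtain ⟨t, ht⟩ := hpx
  obtain ⟨s, hs⟩ := hpy
  have hkey : syncPair (x ++ s.map Sum.inr) = syncPair (y ++ t.map Sum.inl) := by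
    simp only [syncPair, piIn_append', piOut_append', piIn_map_inl, piIn_map_inr,
      piOut_map_inl, piOut_map_inr, List.append_nil]
    exact Prod.ext ht.symm hs
  have hmin := hd.2 _ _ hkey
  have hxk := lag_full_le hx
  have hyk := lag_full_le hy
  have htl : t.length = (piIn x).length - (piIn y).length := by
    have := congrArg List.length ht
    simp at this; omega
  have hsl : s.length = (piOut y).length - (piOut x).length := by
    have := congrArg List.length hs
    simp at this; omega
  simp only [List.length_map] at hmin
  constructor
  · calc u.length ≤ s.length := hmin.1
      _ ≤ k := by omega
  · calc v.length ≤ t.length := hmin.2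
      _ ≤ k := by omega

/-- if `x, y` are compatible with `lag(x) ≤ k`, `lag(y) ≤ k` and
`diff(x,y) = (u,v)`, then `|u| ≤ k` and `|v| ≤ k`. -/
theorem stmt13 {σ γ : Type} (x y u v : List (σ ⊕ γ)) (k : ℕ)
    (hc : Compatible x y) (hd : IsDiff x y u v)
    (hx : lagW x ≤ k) (hy : lagW y ≤ k) :
    u.length ≤ k ∧ v.length ≤ k := by
  rcases le_total (piIn y).length (piIn x).length with h | h
  · exact stmt13_aux x y u v k hc hd hx hy h
  · have hc' : Compatible y x := ⟨hc.1.symm, by obtain ⟨_, u₁, v₁, h1⟩ := hc; exact ⟨v₁, u₁, h1.symm⟩⟩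
    have hd' : IsDiff y x v u :=
      ⟨hd.1.symm, fun u' v' hh => (hd.2 v' u' hh.symm).symm⟩
    exact (stmt13_aux y x v u k hc' hd' hy hx h).symm
end

section
/- Let S ⊆ (Σ∪Γ)* be a regular language with finite shiftlag, and suppose S is the full γ-lagged representation of its relation, i.e., S = {w ∈ L_{≤γ}·(Σ* + Γ*) | ⟦w⟧ ∈ ⟦S⟧}. Then for every y ∈ (Σ∪Γ)* with lag(y) ≤ γ, the residual relation satisfies ⟦y⟧⁻¹⟦S⟧ = ⟦y⁻¹S⟧, where (u,v)⁻¹R = {(x,z) | (ux, vz) ∈ R} and y⁻¹S = {z | yz ∈ S}. -/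
open List

def balZ {σ γ : Type} (w : List (σ ⊕ γ)) : ℤ :=
  ((w.countP Sum.isLeft : ℕ) : ℤ) - ((w.countP Sum.isRight : ℕ) : ℤ)

lemma lagAt_eq_balZ {σ γ : Type} (w : List (σ ⊕ γ)) (i : ℕ) :
    lagAt w i = (balZ (w.take i)).natAbs := rfl

lemma balZ_inl_cons {σ γ : Type} (a : σ) (u : List (σ ⊕ γ)) :
    balZ (Sum.inl a :: u) = balZ u + 1 := by
  simp [balZ, countP_cons]; push_cast; ring

lemma balZ_inr_cons {σ γ : Type} (b : γ) (u : List (σ ⊕ γ)) :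
    balZ (Sum.inr b :: u) = balZ u - 1 := by
  simp [balZ, countP_cons]; push_cast; ring

lemma balZ_append {σ γ : Type} (u v : List (σ ⊕ γ)) :
    balZ (u ++ v) = balZ u + balZ v := by
  simp [balZ, countP_append]; push_cast; ring

lemma lagAt_le_of_lagW {σ γ : Type} {y : List (σ ⊕ γ)} {g : ℕ}
    (h : lagW y ≤ g) (i : ℕ) : lagAt y i ≤ g := by
  rcases le_or_gt i y.length with hi | hi
  · exact le_trans (Finset.le_sup (f := lagAt y)
      (Finset.mem_range.2 (Nat.lt_succ_of_le hi))) h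
  · have : lagAt y i = lagAt y y.length := by
      unfold lagAt
      rw [List.take_of_length_le (le_of_lt hi), List.take_of_length_le le_rfl]
    rw [this]
    exact le_trans (Finset.le_sup (f := lagAt y)
      (Finset.mem_range.2 (Nat.lt_succ_self _))) h

lemma build {σ γ : Type} (g : ℕ) (hg : 1 ≤ g) :
    ∀ (n : ℕ) (x : List σ) (z : List γ) (d : ℤ), x.length + z.length ≤ n →
      d.natAbs ≤ g →
      ∃ w1 q : List (σ ⊕ γ),
        piIn (w1 ++ q) = x ∧ piOut (w1 ++ q) = z ∧
        ((∃ x' : List σ, q = x'.map Sum.inl) ∨ (∃ z' : List γ, q = z'.map Sum.inr)) ∧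
        ∀ j : ℕ, (d + balZ (w1.take j)).natAbs ≤ g := by
  intro n
  induction n with
  | zero =>
    intro x z d hn hd
    have hx : x = [] := by
      cases x <;> simp_all
    have hz : z = [] := by
      cases z <;> simp_all
    subst hx; subst hz
    exact ⟨[], [], by simp [piIn], by simp [piOut], Or.inl ⟨[], rfl⟩,
      fun j => by simpa [balZ] using hd⟩
  | succ n ih =>
    intro x z d hn hd
    match x, z with
    | [], z =>
      refine ⟨[], z.map Sum.inr, ?_, ?_, Or.inr ⟨z, rfl⟩, fun j => by simpa [balZ] using hd⟩
      · simp [piIn, List.filterMap_map]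
      · simp only [piOut, List.filterMap_map]; clear hn; induction z <;> simp_all
    | x, [] =>
      refine ⟨[], x.map Sum.inl, ?_, ?_, Or.inl ⟨x, rfl⟩, fun j => by simpa [balZ] using hd⟩
      · simp only [piIn, List.filterMap_map]; clear hn; induction x <;> simp_all
      · simp [piOut, List.filterMap_map]
    | a :: x', b :: z' =>
      rcases le_or_gt 1 d with hd1 | hd1
      · -- d ≥ 1 : put a right letter
        have hd' : (d - 1).natAbs ≤ g := by omega
        obtain ⟨w1, q, hin, hout, hq, hlag⟩ :=
          ih (a :: x') z' (d - 1) (by simp at hn ⊢; omega) hd'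
        refine ⟨Sum.inr b :: w1, q, ?_, ?_, hq, ?_⟩
        · simpa [piIn, List.filterMap_cons] using hin
        · simpa [piOut] using hout
        · intro j
          cases j with
          | zero => simpa [balZ] using hd
          | succ j =>
            have := hlag j
            simpa [List.take_succ_cons, balZ_inr_cons, sub_eq_add_neg,
              add_comm, add_left_comm, add_assoc] using this
      · -- d ≤ 0 : put a left letter
        have hd' : (d + 1).natAbs ≤ g := by omega
        obtain ⟨w1, q, hin, hout, hq, hlag⟩ :=
          ih x' (b :: z') (d + 1) (by simp at hn ⊢; omega) hd'
        refine ⟨Sum.inl a :: w1, q, ?_, ?_, hq, ?_⟩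
        · simpa [piIn] using hin
        · simpa [piOut, List.filterMap_cons] using hout
        · intro j
          cases j with
          | zero => simpa [balZ] using hd
          | succ j =>
            have := hlag j
            simpa [List.take_succ_cons, balZ_inl_cons,
              add_comm, add_left_comm, add_assoc] using this

/-- if the regular finite-shiftlag language `S` is the full `γ₀`-lagged
representation of its relation, i.e. `S = {w ∈ L_{≤γ₀}·(Σ* + Γ*) | ⟦w⟧ ∈ ⟦S⟧}`, then for
every `y` with `lag(y) ≤ γ₀`, `⟦y⟧⁻¹⟦S⟧ = ⟦y⁻¹S⟧`. -/
theorem stmt15 {σ γ : Type} (S : Set (List (σ ⊕ γ))) (g : ℕ)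
    (hS : IsReg S) (hSfsl : FiniteShiftlag S)
    (hfull : S = {w | (∃ p q : List (σ ⊕ γ), lagW p ≤ g ∧
        ((∃ x : List σ, q = x.map Sum.inl) ∨ (∃ yo : List γ, q = yo.map Sum.inr)) ∧
        w = p ++ q) ∧ syncPair w ∈ syncRel S}) :
    ∀ y : List (σ ⊕ γ), lagW y ≤ g →
      {p : List σ × List γ | (piIn y ++ p.1, piOut y ++ p.2) ∈ syncRel S} =
        syncRel (leftQuot y S) := by
  intro y hy
  ext p
  simp only [Set.mem_setOf_eq]
  constructor
  · intro hmem
    rcases eq_or_ne y [] with rfl | hne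
    · obtain ⟨w, hwS, hw⟩ := hmem
      exact ⟨w, hwS, by simpa [piIn, piOut, syncPair] using hw⟩
    · -- y ≠ [] : g ≥ 1
      obtain ⟨a, t, rfl⟩ := List.exists_cons_of_ne_nil hne
      have hg1 : 1 ≤ g := by
        have h1 := lagAt_le_of_lagW hy 1
        have : lagAt (a :: t) 1 = 1 := by
          rw [lagAt_eq_balZ]
          cases a <;> simp [balZ_inl_cons, balZ_inr_cons, balZ]
        omega
      set y := a :: t with hy'
      have hd : (balZ y).natAbs ≤ g := by
        have := lagAt_le_of_lagW hy y.length
        rwa [lagAt_eq_balZ, List.take_length] at this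
      obtain ⟨w1, q, hin, hout, hq, hlag⟩ :=
        build g hg1 (p.1.length + p.2.length) p.1 p.2 (balZ y) le_rfl hd
      refine ⟨w1 ++ q, ?_, ?_⟩
      · show y ++ (w1 ++ q) ∈ S
        rw [hfull]
        refine ⟨⟨y ++ w1, q, ?_, hq, by rw [List.append_assoc]⟩, ?_⟩
        · -- lagW (y ++ w1) ≤ g
          apply Finset.sup_le
          intro i _
          rw [lagAt_eq_balZ, List.take_append, balZ_append]
          rcases le_or_gt i y.length with hi | hi
          · have h0 : i - y.length = 0 := by omega
            rw [h0]
            simpa [balZ, lagAt_eq_balZ] using lagAt_le_of_lagW hy i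
          · rw [List.take_of_length_le (le_of_lt hi)]
            exact hlag (i - y.length)
        · -- syncPair (y ++ (w1 ++ q)) ∈ syncRel S
          have hsp : syncPair (y ++ (w1 ++ q)) = (piIn y ++ p.1, piOut y ++ p.2) := by
            simp [syncPair, piIn, piOut, List.filterMap_append] at hin hout ⊢
            exact ⟨hin, hout⟩
          rw [hsp]
          exact hmem
      · show syncPair (w1 ++ q) = p
        rw [syncPair, hin, hout]
  · rintro ⟨w, hw, rfl⟩
    refine ⟨y ++ w, hw, ?_⟩
    simp [syncPair, piIn, piOut, List.filterMap_append]
end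

section
/- If a rational relation R ⊆ Σ* × Γ* has the property that there exists n ∈ ℕ such that for every u ∈ dom(R) there is v ∈ Γ* with |v| ≤ n and (u,v) ∈ R, then R has a uniformization by a recognizable relation (e.g., the function mapping each u ∈ dom(R) to the length-lexicographically smallest v with (u,v) ∈ R, whose graph is recognizable). Conversely, if R has a uniformization by a recognizable relation, then such a bound n exists. -/
open List

namespace Aux


theorem isReg_compl {α : Type} {L : Set (List α)} (h : IsReg L) : IsReg Lᶜ := by
  obtain ⟨Q, fQ, M, hM⟩ := h
  refine ⟨Q, fQ, ⟨M.step, M.start, M.acceptᶜ⟩, ?_⟩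
  ext x
  have hx := DFA.mem_accepts (M := M) (x := x)
  rw [hM] at hx
  rw [DFA.mem_accepts, Set.mem_compl_iff]
  exact not_congr hx.symm

theorem isReg_inter {α : Type} {L L' : Set (List α)} (h : IsReg L) (h' : IsReg L') :
    IsReg (L ∩ L') := by
  obtain ⟨Q, fQ, M, hM⟩ := h
  obtain ⟨Q', fQ', M', hM'⟩ := h'
  refine ⟨Q × Q', inferInstance,
    ⟨fun p a => (M.step p.1 a, M'.step p.2 a), (M.start, M'.start),
      {p | p.1 ∈ M.accept ∧ p.2 ∈ M'.accept}⟩, ?_⟩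
  have key : ∀ (x : List α) (q : Q) (q' : Q'),
      DFA.evalFrom ⟨fun p a => (M.step p.1 a, M'.step p.2 a), (M.start, M'.start),
      {p | p.1 ∈ M.accept ∧ p.2 ∈ M'.accept}⟩ (q, q') x
        = (M.evalFrom q x, M'.evalFrom q' x) := by
    intro x
    induction x with
    | nil => intro q q'; rfl
    | cons a x ih => intro q q'; exact ih (M.step q a) (M'.step q' a)
  ext x
  rw [DFA.mem_accepts, ← hM, ← hM']
  rw [show DFA.eval _ x = (M.eval x, M'.eval x) from key x M.start M'.start]
  exact Iff.rfl

theorem isReg_univ {α : Type} : IsReg (Set.univ : Set (List α)) := by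
  refine ⟨Unit, inferInstance, ⟨fun _ _ => (), (), Set.univ⟩, ?_⟩
  ext x
  rw [DFA.mem_accepts]
  exact iff_of_true trivial trivial




theorem concat_prefix_iff {γ : Type} {u v : List γ} {a : γ} :
    u ++ [a] <+: v ↔ u <+: v ∧ v[u.length]? = some a := by
  constructor
  · rintro ⟨t, rfl⟩
    refine ⟨⟨[a] ++ t, by simp⟩, ?_⟩
    rw [List.append_assoc, List.getElem?_append_right le_rfl]
    simp
  · rintro ⟨⟨t, rfl⟩, h⟩
    rw [List.getElem?_append_right le_rfl] at h
    simp at h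
    obtain ⟨t', rfl⟩ : ∃ t', t = a :: t' := by
      cases t with
      | nil => simp at h
      | cons b t' => simp at h; exact ⟨t', by rw [h]⟩
    exact ⟨t', by simp⟩

open Classical in
noncomputable def singDFA {γ : Type} (v : List γ) : DFA γ (Option (Fin (v.length + 1))) where
  step := fun s c => s.bind fun i =>
    if h : (i : ℕ) < v.length ∧ v[(i : ℕ)]? = some c then
      some ⟨(i : ℕ) + 1, Nat.succ_lt_succ h.1⟩ else none
  start := some ⟨0, Nat.succ_pos _⟩
  accept := {s | s = some ⟨v.length, Nat.lt_succ_self _⟩}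

open Classical in
theorem singDFA_eval {γ : Type} (v : List γ) (u : List γ) :
    (singDFA v).eval u =
      if h : u <+: v then some ⟨u.length, Nat.lt_succ_of_le h.length_le⟩ else none := by
  classical
  induction u using List.reverseRecOn with
  | nil =>
    rw [dif_pos (List.nil_prefix)]
    rfl
  | append_singleton u a ih =>
    rw [DFA.eval_append_singleton, ih]
    by_cases hu : u <+: v
    · rw [dif_pos hu]
      by_cases hc : u.length < v.length ∧ v[u.length]? = some a
      · have hpre : u ++ [a] <+: v := concat_prefix_iff.mpr ⟨hu, hc.2⟩
        rw [dif_pos hpre]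
        show (if h : (u.length < v.length ∧ v[u.length]? = some a) then _ else none) = _
        rw [dif_pos hc]
        simp
      · have hnp : ¬ (u ++ [a] <+: v) := by
          intro hp
          rcases concat_prefix_iff.mp hp with ⟨_, h2⟩
          have hl : u.length < v.length := by
            have := hp.length_le
            simp only [List.length_append, List.length_singleton] at this
            omega
          exact hc ⟨by omega, h2⟩
        rw [dif_neg hnp]
        show (if h : (u.length < v.length ∧ v[u.length]? = some a) then _ else none) = _
        rw [dif_neg hc]
    · rw [dif_neg hu, dif_neg (fun hp => hu ((u.prefix_append [a]).trans hp))]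
      rfl

open Classical in
theorem isReg_singleton {γ : Type} (v : List γ) : Language.IsRegular ({v} : Set (List γ)) := by
  refine ⟨_, inferInstance, singDFA v, ?_⟩
  ext u
  rw [DFA.mem_accepts, singDFA_eval]
  by_cases h : u <+: v
  · rw [dif_pos h]
    simp only [singDFA, Set.mem_setOf_eq, Option.some.injEq, Fin.mk.injEq,
      Set.mem_singleton_iff]
    constructor
    · intro hl; exact h.eq_of_length hl
    · rintro rfl; rfl
  · rw [dif_neg h]
    simp only [singDFA, Set.mem_setOf_eq, Set.mem_singleton_iff]
    constructor
    · intro hc; exact absurd hc (by simp)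
    · rintro rfl; exact absurd List.prefix_rfl h




variable {σ γ : Type}

theorem piIn_append (w w' : List (σ ⊕ γ)) : piIn (w ++ w') = piIn w ++ piIn w' :=
  List.filterMap_append

theorem piOut_append (w w' : List (σ ⊕ γ)) : piOut (w ++ w') = piOut w ++ piOut w' :=
  List.filterMap_append

@[simp] theorem piIn_map_inr (y : List γ) : piIn ((y.map Sum.inr) : List (σ ⊕ γ)) = [] := by
  simp [piIn, List.filterMap_map, Function.comp]

@[simp] theorem piOut_map_inr (y : List γ) : piOut ((y.map Sum.inr) : List (σ ⊕ γ)) = y := by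
  rw [piOut, List.filterMap_map]
  rw [show (Sum.getRight? ∘ (Sum.inr : γ → σ ⊕ γ)) = some from rfl, List.filterMap_some]

theorem eq_map_inr_of_piIn_nil (w : List (σ ⊕ γ)) (h : piIn w = []) :
    w = (piOut w).map Sum.inr := by
  induction w with
  | nil => rfl
  | cons x w ih =>
    cases x with
    | inl a => simp [piIn, List.filterMap_cons] at h
    | inr c =>
      simp only [piIn, List.filterMap_cons] at h ih ⊢
      simp only [Sum.getLeft?] at h
      simp only [piOut, List.filterMap_cons, Sum.getRight?, List.map_cons]
      exact congrArg _ (ih h)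

theorem piIn_concat_decomp (w : List (σ ⊕ γ)) (u : List σ) (a : σ)
    (h : piIn w = u ++ [a]) :
    ∃ w' s, w = w' ++ Sum.inl a :: s ∧ piIn w' = u ∧ piIn s = [] := by
  induction w using List.reverseRecOn with
  | nil => simp [piIn] at h
  | append_singleton w x ih =>
    cases x with
    | inl b =>
      rw [piIn_append] at h
      simp only [piIn, List.filterMap_cons, Sum.getLeft?, List.filterMap_nil] at h
      obtain ⟨h1, h2⟩ := List.append_inj' h rfl
      have hb : b = a := by simpa using h2
      subst hb
      exact ⟨w, [], by simp, h1, rfl⟩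
    | inr c =>
      rw [piIn_append] at h
      simp only [piIn, List.filterMap_cons, Sum.getLeft?, List.filterMap_nil,
        List.append_nil] at h
      obtain ⟨w', s, rfl, h1, h2⟩ := ih h
      exact ⟨w', s ++ [Sum.inr c], by simp, h1, by rw [piIn_append, h2]; simp [piIn]⟩

variable {Q : Type}

def projNFA (M : DFA (σ ⊕ γ) Q) (v : List γ) : NFA σ (Q × Fin (v.length + 1)) where
  step := fun p a =>
    {q | (p.2 : ℕ) ≤ (q.2 : ℕ) ∧
      q.1 = M.evalFrom (M.step p.1 (Sum.inl a)) (((v.take q.2).drop p.2).map Sum.inr)}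
  start := {q | q.1 = M.evalFrom M.start ((v.take q.2).map Sum.inr)}
  accept := {q | (q.2 : ℕ) = v.length ∧ q.1 ∈ M.accept}

theorem projNFA_eval (M : DFA (σ ⊕ γ) Q) (v : List γ) (u : List σ) (q : Q)
    (j : Fin (v.length + 1)) :
    (q, j) ∈ (projNFA M v).eval u ↔
      ∃ w, piIn w = u ∧ piOut w = v.take j ∧ q = M.eval w := by
  induction u using List.reverseRecOn generalizing q j with
  | nil =>
    show (q, j) ∈ (projNFA M v).start ↔ _
    constructor
    · intro h
      exact ⟨(v.take (j : ℕ)).map Sum.inr, piIn_map_inr _, piOut_map_inr _, h⟩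
    · rintro ⟨w, h1, h2, rfl⟩
      have hw : w = (v.take (j : ℕ)).map Sum.inr := by
        rw [eq_map_inr_of_piIn_nil w h1, h2]
      show M.eval w = _
      rw [hw]
      rfl
  | append_singleton u a ih =>
    rw [NFA.eval_append_singleton, NFA.mem_stepSet]
    constructor
    · rintro ⟨⟨q₀, j₀⟩, hmem, hle, hq⟩
      dsimp only at hle hq
      obtain ⟨w₀, hw1, hw2, rfl⟩ := (ih q₀ j₀).mp hmem
      refine ⟨w₀ ++ Sum.inl a :: ((v.take (j : ℕ)).drop (j₀ : ℕ)).map Sum.inr, ?_, ?_, ?_⟩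
      · have h3 : piIn ((Sum.inl a : σ ⊕ γ) :: ((v.take (j : ℕ)).drop (j₀ : ℕ)).map Sum.inr)
            = a :: piIn (((v.take (j : ℕ)).drop (j₀ : ℕ)).map Sum.inr) := by
          simp [piIn, List.filterMap_cons, Sum.getLeft?]
        rw [piIn_append, hw1, h3, piIn_map_inr]
      · rw [piOut_append, hw2]
        have : piOut ((Sum.inl a : σ ⊕ γ) :: ((v.take (j : ℕ)).drop (j₀ : ℕ)).map Sum.inr)
            = (v.take (j : ℕ)).drop (j₀ : ℕ) := by
          simp only [piOut, List.filterMap_cons, Sum.getRight?]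
          exact piOut_map_inr _
        rw [this]
        have htk : v.take (j₀ : ℕ) = (v.take (j : ℕ)).take (j₀ : ℕ) := by
          rw [List.take_take, min_eq_left hle]
        rw [htk, List.take_append_drop]
      · rw [hq]
        rw [show M.eval (w₀ ++ Sum.inl a :: ((v.take (j : ℕ)).drop (j₀ : ℕ)).map Sum.inr)
            = M.evalFrom (M.eval w₀)
              (Sum.inl a :: ((v.take (j : ℕ)).drop (j₀ : ℕ)).map Sum.inr)
          from M.evalFrom_of_append _ _ _]
        rfl
    · rintro ⟨w, hw1, hw2, rfl⟩
      obtain ⟨w', s, rfl, hw'1, hs⟩ := piIn_concat_decomp w u a hw1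
      have hsr := eq_map_inr_of_piIn_nil s hs
      have hsplit : piOut w' ++ piOut s = v.take (j : ℕ) := by
        rw [← hw2, piOut_append]
        congr 1
      have hjlen : ((v.take (j : ℕ)).length : ℕ) = (j : ℕ) := by
        rw [List.length_take]
        exact min_eq_left (Nat.lt_succ_iff.mp j.isLt)
      have hj₀le : (piOut w').length ≤ (j : ℕ) := by
        have := congrArg List.length hsplit
        rw [List.length_append, hjlen] at this
        omega
      have hw'2 : piOut w' = v.take (piOut w').length := by
        have h1 : piOut w' = (v.take (j : ℕ)).take (piOut w').length := by
          rw [← hsplit, List.take_left]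
        conv_lhs => rw [h1, List.take_take, min_eq_left hj₀le]
      have hs2 : piOut s = (v.take (j : ℕ)).drop (piOut w').length := by
        rw [← hsplit, List.drop_left]
      refine ⟨(M.eval w', ⟨(piOut w').length, lt_of_le_of_lt hj₀le j.isLt⟩),
        (ih _ _).mpr ⟨w', hw'1, hw'2, rfl⟩, hj₀le, ?_⟩
      show M.eval (w' ++ Sum.inl a :: s) = _
      rw [show M.eval (w' ++ Sum.inl a :: s) = M.evalFrom (M.eval w') (Sum.inl a :: s)
        from M.evalFrom_of_append _ _ _]
      rw [show s = ((v.take (j : ℕ)).drop (piOut w').length).map Sum.inr from hs2 ▸ hsr]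
      rfl

theorem projNFA_accepts (M : DFA (σ ⊕ γ) Q) (v : List γ) :
    (projNFA M v).accepts = {u | ∃ w, piIn w = u ∧ piOut w = v ∧ w ∈ M.accepts} := by
  ext u
  rw [NFA.mem_accepts]
  constructor
  · rintro ⟨⟨q, j⟩, ⟨hj, hacc⟩, hev⟩
    obtain ⟨w, h1, h2, rfl⟩ := (projNFA_eval M v u q j).mp hev
    refine ⟨w, h1, ?_, hacc⟩
    rw [h2, hj, List.take_length]
  · rintro ⟨w, h1, h2, hw⟩
    refine ⟨(M.eval w, ⟨v.length, Nat.lt_succ_self _⟩), ⟨rfl, hw⟩,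
      (projNFA_eval M v u _ _).mpr ⟨w, h1, ?_, rfl⟩⟩
    rw [h2]
    exact List.take_length.symm

theorem isReg_fiber {L : Set (List (σ ⊕ γ))} (h : Language.IsRegular (L : Set (List (σ ⊕ γ))))
    (v : List γ) :
    Language.IsRegular ({u : List σ | ∃ w ∈ L, piIn w = u ∧ piOut w = v} : Set (List σ)) := by
  obtain ⟨Q, fQ, M, hM⟩ := h
  refine ⟨Set (Q × Fin (v.length + 1)), Fintype.ofFinite _, (projNFA M v).toDFA, ?_⟩
  rw [NFA.toDFA_correct, projNFA_accepts]
  ext u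
  constructor
  · rintro ⟨w, h1, h2, hw⟩
    exact ⟨w, by rwa [← hM], h1, h2⟩
  · rintro ⟨w, hw, h1, h2⟩
    exact ⟨w, h1, h2, by rwa [hM]⟩



theorem finite_alphabet {L : Set (List (σ ⊕ γ))} (h : Language.IsRegular (L : Set (List (σ ⊕ γ)))) :
    ∃ G : Set γ, G.Finite ∧ ∀ w ∈ L, ∃ w' ∈ L, piIn w' = piIn w ∧
      (piOut w').length = (piOut w).length ∧ ∀ c ∈ piOut w', c ∈ G := by
  obtain ⟨Q, fQ, M, hM⟩ := h
  set cls : γ → (Q → Q) := fun c q => M.step q (Sum.inr c) with hcls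
  have hex : ∀ c : γ, ∃ c', cls c' = cls c := fun c => ⟨c, rfl⟩
  set pick : {f : Q → Q // ∃ c, cls c = f} → γ := fun f => Classical.choose f.2 with hpick
  set r : γ → γ := fun c => pick ⟨cls c, hex c⟩ with hrdef
  have hr : ∀ c, cls (r c) = cls c := fun c => Classical.choose_spec (hex c)
  set φ : σ ⊕ γ → σ ⊕ γ := Sum.map id r with hφ
  have hstep : ∀ (q : Q) (x : σ ⊕ γ), M.step q (φ x) = M.step q x := by
    intro q x
    cases x with
    | inl a => rfl
    | inr c => exact congrFun (hr c) q
  have heval : ∀ (w : List (σ ⊕ γ)) (q : Q), M.evalFrom q (w.map φ) = M.evalFrom q w := by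
    intro w
    induction w with
    | nil => intro q; rfl
    | cons x w ih =>
      intro q
      show M.evalFrom (M.step q (φ x)) (w.map φ) = M.evalFrom (M.step q x) w
      rw [hstep, ih]
  refine ⟨Set.range pick, Set.finite_range pick, ?_⟩
  intro w hw
  refine ⟨w.map φ, ?_, ?_, ?_, ?_⟩
  · have : w.map φ ∈ M.accepts := by
      rw [DFA.mem_accepts]
      show M.evalFrom M.start (w.map φ) ∈ M.accept
      rw [heval]
      have : w ∈ M.accepts := by rw [hM]; exact hw
      exact this
    rwa [hM] at this
  · rw [piIn, List.filterMap_map]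
    have : Sum.getLeft? ∘ φ = (Sum.getLeft? : σ ⊕ γ → Option σ) := by
      funext x; cases x <;> rfl
    rw [this]
    rfl
  · rw [piOut, List.filterMap_map]
    have : (Sum.getRight? ∘ φ) = fun x : σ ⊕ γ => (Sum.getRight? x).map r := by
      funext x; cases x <;> rfl
    rw [this, ← List.map_filterMap]
    simp [piOut]
  · intro c hc
    rw [piOut, List.filterMap_map] at hc
    have : (Sum.getRight? ∘ φ) = fun x : σ ⊕ γ => (Sum.getRight? x).map r := by
      funext x; cases x <;> rfl
    rw [this, ← List.map_filterMap] at hc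
    obtain ⟨c₀, _, rfl⟩ := List.mem_map.mp hc
    exact ⟨⟨cls c₀, hex c₀⟩, rfl⟩

end Aux

/-- a rational relation `R` has a uniformization by a recognizable relation iff
there is a bound `n` such that every `u ∈ dom(R)` has an output `v` with `|v| ≤ n` and
`(u,v) ∈ R`. -/
theorem stmt18 {σ γ : Type} (R : Set (List σ × List γ))
    (hrat : ∃ L : Set (List (σ ⊕ γ)), IsReg L ∧ syncRel L = R) :
    (∃ n : ℕ, ∀ u ∈ rdom R, ∃ v, v.length ≤ n ∧ (u, v) ∈ R) ↔
    (∃ Rf, Recognizable Rf ∧ Rf ⊆ R ∧ ∀ u ∈ rdom R, ∃! v, (u, v) ∈ Rf) := by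
  classical
  obtain ⟨L, hL, hLR⟩ := hrat
  constructor
  · rintro ⟨n, hbd⟩
    obtain ⟨G, hGfin, hGmap⟩ := Aux.finite_alphabet hL
    have hGsub : Finite ↥G := hGfin.to_subtype
    have hFfin : {l : List γ | l.length ≤ n ∧ ∀ c ∈ l, c ∈ G}.Finite := by
      have himg : ((fun l : List {c : γ // c ∈ G} => l.map Subtype.val) ''
          {l | l.length ≤ n}).Finite := (List.finite_length_le _ n).image _
      refine himg.subset ?_
      rintro l ⟨hlen, hmem⟩
      refine ⟨l.attach.map (fun x => ⟨x.1, hmem x.1 x.2⟩), by simpa using hlen, ?_⟩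
      simp [List.map_map]
    set vs : List (List γ) := hFfin.toFinset.toList with hvs
    have hvsmem : ∀ v : List γ, v ∈ vs ↔ (v.length ≤ n ∧ ∀ c ∈ v, c ∈ G) := by
      intro v
      rw [hvs, Finset.mem_toList, Set.Finite.mem_toFinset]
      exact Iff.rfl
    set A : Fin vs.length → Set (List σ) := fun k => {u | (u, vs.get k) ∈ R} with hA
    have hAreg : ∀ k, IsReg (A k) := by
      intro k
      have hfib := Aux.isReg_fiber hL (vs.get k)
      have hset : A k = {u : List σ | ∃ w ∈ L, piIn w = u ∧ piOut w = vs.get k} := by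
        ext u
        simp only [hA, Set.mem_setOf_eq]
        rw [← hLR]
        constructor
        · rintro ⟨w, hw, he⟩
          exact ⟨w, hw, congrArg Prod.fst he, congrArg Prod.snd he⟩
        · rintro ⟨w, hw, h1, h2⟩
          exact ⟨w, hw, by rw [syncPair, h1, h2]⟩
      rw [hset]
      exact hfib
    have hcover : ∀ u ∈ rdom R, ∃ k : Fin vs.length, u ∈ A k := by
      intro u hu
      obtain ⟨v, hvlen, hvR⟩ := hbd u hu
      have hmemL : (u, v) ∈ syncRel L := by rw [hLR]; exact hvR
      obtain ⟨w, hw, he⟩ := hmemL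
      have h1 : piIn w = u := congrArg Prod.fst he
      have h2 : piOut w = v := congrArg Prod.snd he
      obtain ⟨w', hw', hin, hlen, hmem⟩ := hGmap w hw
      have hv' : piOut w' ∈ vs := (hvsmem _).mpr ⟨by rw [hlen, h2]; exact hvlen, hmem⟩
      obtain ⟨k, hk⟩ := List.mem_iff_get.mp hv'
      refine ⟨k, ?_⟩
      show (u, vs.get k) ∈ R
      rw [hk, ← hLR]
      exact ⟨w', hw', by rw [syncPair, hin, h1]⟩
    have hB : ∀ k : ℕ, ∃ Bk : Set (List σ), IsReg Bk ∧
        ∀ u, u ∈ Bk ↔ ∀ j : Fin vs.length, (j : ℕ) < k → u ∉ A j := by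
      intro k
      induction k with
      | zero => exact ⟨Set.univ, Aux.isReg_univ, by simp⟩
      | succ k ih =>
        obtain ⟨Bk, hreg, hch⟩ := ih
        by_cases hk : k < vs.length
        · refine ⟨Bk ∩ (A ⟨k, hk⟩)ᶜ,
            Aux.isReg_inter hreg (Aux.isReg_compl (hAreg _)), ?_⟩
          intro u
          rw [Set.mem_inter_iff, hch u, Set.mem_compl_iff]
          constructor
          · rintro ⟨hone, htwo⟩ j hj
            rcases Nat.lt_succ_iff_lt_or_eq.mp hj with h | h
            · exact hone j h
            · have hje : j = ⟨k, hk⟩ := Fin.ext h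
              rw [hje]; exact htwo
          · intro hall
            exact ⟨fun j hj => hall j (Nat.lt_succ_of_lt hj),
              hall ⟨k, hk⟩ (Nat.lt_succ_self k)⟩
        · refine ⟨Bk, hreg, fun u => ?_⟩
          rw [hch u]
          constructor
          · intro hone j hj
            exact hone j (lt_of_lt_of_le j.isLt (Nat.le_of_not_lt hk))
          · intro hall j hj
            exact hall j (Nat.lt_succ_of_lt hj)
    choose B hBreg hBch using hB
    refine ⟨⋃ k : Fin vs.length,
      {p : List σ × List γ | p.1 ∈ A k ∩ B (k : ℕ) ∧ p.2 ∈ ({vs.get k} : Set (List γ))},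
      ⟨vs.length, fun k => A k ∩ B (k : ℕ), fun k => {vs.get k},
        fun k => ⟨Aux.isReg_inter (hAreg k) (hBreg (k : ℕ)), Aux.isReg_singleton _⟩, rfl⟩,
      ?_, ?_⟩
    · rintro ⟨u, v⟩ hp
      obtain ⟨k, hk⟩ := Set.mem_iUnion.mp hp
      obtain ⟨⟨hu, -⟩, hv⟩ := hk
      have hveq : v = vs.get k := hv
      rw [hveq]
      exact hu
    · intro u hu
      have hex : ∃ mm : ℕ, ∃ hm : mm < vs.length, u ∈ A ⟨mm, hm⟩ := by
        obtain ⟨k, hk⟩ := hcover u hu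
        exact ⟨(k : ℕ), k.isLt, by simpa using hk⟩
      obtain ⟨hm, hAm⟩ := Nat.find_spec hex
      set mm := Nat.find hex with hmm
      have hmin : ∀ j : Fin vs.length, (j : ℕ) < mm → u ∉ A j := by
        intro j hj hAj
        exact Nat.find_min hex hj ⟨j.isLt, by simpa using hAj⟩
      refine ⟨vs.get ⟨mm, hm⟩, ?_, ?_⟩
      · exact Set.mem_iUnion.mpr ⟨⟨mm, hm⟩, ⟨hAm, (hBch mm u).mpr hmin⟩, rfl⟩
      · rintro v' hv'
        obtain ⟨k, hk⟩ := Set.mem_iUnion.mp hv'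
        obtain ⟨⟨hA', hB'⟩, hveq⟩ := hk
        have hkm : (k : ℕ) = mm := by
          have hx1 : ¬ (k : ℕ) < mm := fun h => hmin k h hA'
          have hx2 : ¬ mm < (k : ℕ) := fun h => ((hBch (k : ℕ) u).mp hB') ⟨mm, hm⟩ h hAm
          omega
        have hke : k = ⟨mm, hm⟩ := Fin.ext hkm
        have hveq' : v' = vs.get k := hveq
        rw [hveq', hke]
  · rintro ⟨Rf, ⟨m, U, V, hUV, hRfEq⟩, hsub, huniq⟩
    refine ⟨(Finset.univ : Finset (Fin m)).sup
      (fun i => if h : (V i).Nonempty then h.choose.length else 0), ?_⟩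
    intro u hu
    obtain ⟨v, hv, -⟩ := huniq u hu
    have hvmem : (u, v) ∈ ⋃ i, {p : List σ × List γ | p.1 ∈ U i ∧ p.2 ∈ V i} := by
      rw [← hRfEq]; exact hv
    obtain ⟨i, hui, hvi⟩ := Set.mem_iUnion.mp hvmem
    have hne : (V i).Nonempty := ⟨v, hvi⟩
    refine ⟨hne.choose, ?_, ?_⟩
    · have hle := Finset.le_sup (f := fun i => if h : (V i).Nonempty then h.choose.length else 0)
        (Finset.mem_univ i)
      rwa [dif_pos hne] at hle
    · apply hsub
      rw [hRfEq]
      exact Set.mem_iUnion.mpr ⟨i, hui, hne.choose_spec⟩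
end
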